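/- arXiv:2011.07256 — 6 statements merged into one kernel-verified Lean document; each statement's English description precedes it below -/
import Mathlib

section
/- Let N be a positive integer, a, δ ∈ ℝ, α₁ > 0, and set λ_n = n²π², b_n = √2/(nπ). Assume λ_{N+1} − a − δ − (1/(2α₁))·λ_{N+1}^{3/4} ≥ 0 and λ_{N+1}^{1/4} ≥ 3/(8α₁) (the latter ensures λ ↦ λ − (1/(2α₁))λ^{3/4} is nondecreasing for λ ≥ λ_{N+1}). Let κ, ζ ∈ ℝ and let (w_n)_{n>N} be reals with ∑_{n=N+1}^∞ λ_n²·w_n² < ∞ and ζ² ≤ ∑_{n=N+1}^∞ λ_n·w_n². Then 2·∑_{n=N+1}^∞ (−λ_n² + (a+δ)λ_n)·w_n² − 2·∑_{n=N+1}^∞ λ_n·w_n·b_n·κ ≤ −2·(λ_{N+1} − a − δ − (1/(2α₁))·λ_{N+1}^{3/4})·ζ² + (4α₁/(√N·π^{3/2}))·κ². -/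
open Real

private lemma rpow34 (x : ℝ) (hx : 0 ≤ x) : (x ^ 4 : ℝ) ^ ((3:ℝ)/4) = x ^ 3 := by
  rw [← Real.rpow_natCast x 4, ← Real.rpow_mul hx, ← Real.rpow_natCast x 3]
  norm_num

private lemma rpow14 (x : ℝ) (hx : 0 ≤ x) : (x ^ 4 : ℝ) ^ ((1:ℝ)/4) = x := by
  rw [← Real.rpow_natCast x 4, ← Real.rpow_mul hx]
  norm_num

private lemma mono_core (α₁ s t : ℝ) (hα : 0 < α₁) (hts : t ≤ s) (ht : 0 < t)
    (h3 : 3 ≤ 8 * α₁ * t) :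
    s ^ 3 - t ^ 3 ≤ 2 * α₁ * (s ^ 4 - t ^ 4) := by
  nlinarith [mul_nonneg (sub_nonneg.2 hts) (mul_nonneg (sub_nonneg.2 hts) ht.le),
    sq_nonneg (s - t), sq_nonneg (s + t), mul_pos ht (lt_of_lt_of_le ht hts),
    mul_nonneg (sub_nonneg.2 hts) (sq_nonneg s), mul_nonneg (sub_nonneg.2 hts) (sq_nonneg t),
    mul_nonneg (mul_nonneg (sub_nonneg.2 hts) (sub_nonneg.2 hts)) (sq_nonneg s),
    mul_nonneg (mul_nonneg (sub_nonneg.2 hts) ht.le) (sq_nonneg s)]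

private lemma tele_core (u v : ℝ) (hu : 0 < u) (huv : u ≤ v) (h : v ^ 2 = u ^ 2 + 1) :
    1 / v ^ 3 ≤ 2 * (1 / u - 1 / v) := by
  have hv : 0 < v := lt_of_lt_of_le hu huv
  rw [div_sub_div _ _ hu.ne' hv.ne', ← mul_div_assoc,
    div_le_div_iff₀ (by positivity) (by positivity)]
  nlinarith [mul_pos hu hv, sq_nonneg (v - u), mul_pos (mul_pos hu hv) hv,
    mul_nonneg (sub_nonneg.2 huv) (mul_pos hu hv).le,
    mul_nonneg (mul_nonneg (sub_nonneg.2 huv) hv.le) (mul_pos hu hv).le]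

private lemma perterm (a δ α₁ s t b w κ : ℝ) (hα : 0 < α₁) (hs : 0 < s)
    (hst : s ^ 3 - t ^ 3 ≤ 2 * α₁ * (s ^ 4 - t ^ 4)) :
    2 * (-((s^4)^2) + (a+δ)*s^4) * w^2 - 2 * (s^4*w*b*κ)
      ≤ -2 * (t^4 - a - δ - 1/(2*α₁)*t^3) * (s^4*w^2) + α₁*s*b^2*κ^2 := by
  have hb : (0:ℝ) < 2*α₁ := by linarith
  have hm2 : t^4 - 1/(2*α₁)*t^3 ≤ s^4 - 1/(2*α₁)*s^3 := by
    have h1 : (s^3 - t^3)/(2*α₁) ≤ s^4 - t^4 := (div_le_iff₀ hb).2 (by linarith)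
    have h2 : (s^3 - t^3)/(2*α₁) = 1/(2*α₁)*s^3 - 1/(2*α₁)*t^3 := by ring
    linarith
  have hsw : (0:ℝ) ≤ s^4*w^2 := by positivity
  have hm3 := mul_le_mul_of_nonneg_right hm2 hsw
  have hy2 : -2*(s^4*w*b*κ) - α₁*s*b^2*κ^2 ≤ 1/(2*α₁)*(2*s^7*w^2) := by
    have h3 : 1/(2*α₁)*(2*s^7*w^2) = (2*s^7*w^2)/(2*α₁) := by ring
    rw [h3, le_div_iff₀ hb]
    nlinarith [mul_nonneg hs.le (sq_nonneg (s^3*w + α₁*b*κ))]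
  nlinarith [hm3, hy2]

set_option maxHeartbeats 1000000 in
/-- Tail estimate of the Lyapunov analysis: with `λ_n = n²π²`, `b_n = √2/(nπ)`
(here index `k` stands for `n = N+1+k`), under
`λ_{N+1} − a − δ − (1/(2α₁))λ_{N+1}^{3/4} ≥ 0` and `λ_{N+1}^{1/4} ≥ 3/(8α₁)`,
for any `κ, ζ` and reals `(w_n)_{n>N}` with `∑ λ_n² w_n² < ∞` and `ζ² ≤ ∑ λ_n w_n²`,
`2∑(−λ_n² + (a+δ)λ_n)w_n² − 2∑ λ_n w_n b_n κ
  ≤ −2(λ_{N+1} − a − δ − (1/(2α₁))λ_{N+1}^{3/4})ζ² + (4α₁/(√N π^{3/2}))κ²`. -/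
theorem stmt_6 (N : ℕ+) (a δ α₁ : ℝ) (hα₁ : 0 < α₁)
    (hpos : ((N : ℝ) + 1) ^ 2 * π ^ 2 - a - δ
        - (1 / (2 * α₁)) * ((((N : ℝ) + 1) ^ 2 * π ^ 2) ^ ((3 : ℝ) / 4)) ≥ 0)
    (hmono : ((((N : ℝ) + 1) ^ 2 * π ^ 2) ^ ((1 : ℝ) / 4)) ≥ 3 / (8 * α₁))
    (κ ζ : ℝ) (w : ℕ → ℝ)
    (hw : Summable fun k : ℕ => ((((k : ℝ) + (N : ℝ) + 1) ^ 2 * π ^ 2) ^ 2) * (w k) ^ 2)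
    (hζ : ζ ^ 2 ≤ ∑' k : ℕ, (((k : ℝ) + (N : ℝ) + 1) ^ 2 * π ^ 2) * (w k) ^ 2) :
    2 * (∑' k : ℕ, (-((((k : ℝ) + (N : ℝ) + 1) ^ 2 * π ^ 2) ^ 2)
          + (a + δ) * (((k : ℝ) + (N : ℝ) + 1) ^ 2 * π ^ 2)) * (w k) ^ 2)
      - 2 * (∑' k : ℕ, (((k : ℝ) + (N : ℝ) + 1) ^ 2 * π ^ 2) * w k *
          (Real.sqrt 2 / (((k : ℝ) + (N : ℝ) + 1) * π)) * κ)
    ≤ -2 * (((N : ℝ) + 1) ^ 2 * π ^ 2 - a - δ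
          - (1 / (2 * α₁)) * ((((N : ℝ) + 1) ^ 2 * π ^ 2) ^ ((3 : ℝ) / 4))) * ζ ^ 2
      + (4 * α₁ / (Real.sqrt (N : ℝ) * π ^ ((3 : ℝ) / 2))) * κ ^ 2 := by
  have hπ : (0:ℝ) < π := Real.pi_pos
  have hπ1 : (1:ℝ) ≤ π := by linarith [Real.pi_gt_three]
  have hN1 : (1:ℝ) ≤ (N:ℝ) := by exact_mod_cast N.one_le
  have hN0 : (0:ℝ) < (N:ℝ) := by linarith
  -- t and its facts
  set t : ℝ := Real.sqrt (((N:ℝ)+1)*π) with htdef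
  have ht0 : 0 < t := Real.sqrt_pos.2 (by positivity)
  have ht2 : t^2 = ((N:ℝ)+1)*π := Real.sq_sqrt (by positivity)
  have ht4 : ((N : ℝ) + 1) ^ 2 * π ^ 2 = t^4 := by
    have : t^4 = (t^2)^2 := by ring
    rw [this, ht2]; ring
  rw [ht4, rpow34 t ht0.le] at hpos ⊢
  rw [ht4, rpow14 t ht0.le] at hmono
  have h3 : 3 ≤ 8 * α₁ * t := by
    rw [ge_iff_le, div_le_iff₀ (by positivity)] at hmono
    linarith
  -- s and its facts
  set s : ℕ → ℝ := fun k => Real.sqrt (((k:ℝ)+(N:ℝ)+1)*π) with hsdef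
  have hnpos : ∀ k : ℕ, (0:ℝ) < ((k:ℝ)+(N:ℝ)+1) := fun k => by positivity
  have hs0 : ∀ k, 0 < s k := fun k => Real.sqrt_pos.2 (by positivity)
  have hs2 : ∀ k, (s k)^2 = ((k:ℝ)+(N:ℝ)+1)*π := fun k => Real.sq_sqrt (by positivity)
  have hs4 : ∀ k : ℕ, ((k : ℝ) + (N : ℝ) + 1) ^ 2 * π ^ 2 = (s k)^4 := fun k => by
    have : (s k)^4 = ((s k)^2)^2 := by ring
    rw [this, hs2]; ring
  have hts : ∀ k, t ≤ s k := fun k => Real.sqrt_le_sqrt (by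
    have : (0:ℝ) ≤ (k:ℝ) := Nat.cast_nonneg k
    nlinarith)
  have hst : ∀ k, (s k) ^ 3 - t ^ 3 ≤ 2 * α₁ * ((s k) ^ 4 - t ^ 4) :=
    fun k => mono_core α₁ (s k) t hα₁ (hts k) ht0 h3
  have hs1 : ∀ k, (1:ℝ) ≤ s k := fun k => by
    rw [show (1:ℝ) = Real.sqrt 1 from (Real.sqrt_one).symm]
    apply Real.sqrt_le_sqrt
    have : (0:ℝ) ≤ (k:ℝ) := Nat.cast_nonneg k
    nlinarith
  -- telescoping sequence
  set p32 : ℝ := π ^ ((3:ℝ)/2) with hp32def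
  have hp32 : p32 = (Real.sqrt π)^3 := by
    rw [hp32def, Real.sqrt_eq_rpow, ← Real.rpow_natCast (π ^ ((1:ℝ)/2)) 3,
      ← Real.rpow_mul hπ.le]
    norm_num
  have hp0 : 0 < Real.sqrt π := Real.sqrt_pos.2 hπ
  have hp32pos : 0 < p32 := by rw [hp32]; positivity
  set g : ℕ → ℝ := fun k => 4/p32 * (1/Real.sqrt ((k:ℝ)+(N:ℝ))) with hgdef
  have hu0 : ∀ k : ℕ, 0 < Real.sqrt ((k:ℝ)+(N:ℝ)) := fun k => Real.sqrt_pos.2 (by positivity)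
  -- key telescoping bound : 2/(s k)^3 ≤ g k - g (k+1)
  have htele : ∀ k : ℕ, 2/(s k)^3 ≤ g k - g (k+1) := by
    intro k
    set u : ℝ := Real.sqrt ((k:ℝ)+(N:ℝ)) with hu
    set v : ℝ := Real.sqrt (((k:ℝ)+(N:ℝ))+1) with hv
    have hu' : 0 < u := hu0 k
    have hv' : 0 < v := Real.sqrt_pos.2 (by positivity)
    have huv : u ≤ v := Real.sqrt_le_sqrt (by linarith)
    have hv2 : v^2 = u^2 + 1 := by
      rw [hu, hv, Real.sq_sqrt (by positivity), Real.sq_sqrt (by positivity)]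
    have hcore := tele_core u v hu' huv hv2
    have hsv : s k = v * Real.sqrt π := by
      have e : ((k:ℝ)+(N:ℝ)+1)*π = (((k:ℝ)+(N:ℝ))+1)*π := by ring
      rw [hsdef]
      simp only
      rw [e, hv, ← Real.sqrt_mul (by positivity)]
    have hg1 : g (k+1) = 4/p32 * (1/v) := by
      rw [hgdef, hv]
      push_cast
      ring_nf
    have hg0 : g k = 4/p32 * (1/u) := by rw [hgdef, hu]
    rw [hg0, hg1, hsv]
    have e1 : 2/((v * Real.sqrt π)^3) = (2/(Real.sqrt π)^3) * (1/v^3) := by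
      field_simp
    rw [e1]
    have e2 : 4/p32 * (1/u) - 4/p32 * (1/v) = (2/(Real.sqrt π)^3) * (2*(1/u - 1/v)) := by
      rw [hp32]; field_simp; ring
    rw [e2]
    exact mul_le_mul_of_nonneg_left hcore (by positivity)
  have htele_nonneg : ∀ k : ℕ, 0 ≤ g k - g (k+1) :=
    fun k => le_trans (by positivity) (htele k)
  have hg_pos : ∀ k, 0 ≤ g k := fun k => by positivity
  have hsumrange : ∀ n : ℕ, ∑ i ∈ Finset.range n, (g i - g (i+1)) ≤ g 0 := by
    intro n
    rw [Finset.sum_range_sub' g n]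
    have := hg_pos n
    linarith
  have htelsum : Summable (fun k => g k - g (k+1)) :=
    summable_of_sum_range_le htele_nonneg hsumrange
  have htel_tsum_le : ∑' k : ℕ, (g k - g (k+1)) ≤ g 0 :=
    Real.tsum_le_of_sum_range_le htele_nonneg hsumrange
  -- summabilities
  have hL1 : ∀ k : ℕ, (1:ℝ) ≤ ((k : ℝ) + (N : ℝ) + 1) ^ 2 * π ^ 2 := by
    intro k
    have h0 : (0:ℝ) ≤ (k:ℝ) := Nat.cast_nonneg k
    have h1 : (1:ℝ) ≤ ((k:ℝ)+(N:ℝ)+1) := by linarith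
    have h2 : (1:ℝ) ≤ ((k:ℝ)+(N:ℝ)+1)^2 := by nlinarith
    have h3 : (1:ℝ) ≤ π^2 := by nlinarith
    have h5 := mul_le_mul h2 h3 zero_le_one (by positivity)
    linarith
  have hLw : Summable (fun k : ℕ => (((k : ℝ) + (N : ℝ) + 1) ^ 2 * π ^ 2) * (w k) ^ 2) := by
    apply Summable.of_nonneg_of_le (fun k => by positivity) _ hw
    intro k
    have h1 := hL1 k
    have h4 : (((k : ℝ) + (N : ℝ) + 1) ^ 2 * π ^ 2) ≤ (((k : ℝ) + (N : ℝ) + 1) ^ 2 * π ^ 2)^2 := by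
      have h5 := mul_le_mul_of_nonneg_left h1 (le_trans zero_le_one h1)
      nlinarith [h5]
    exact mul_le_mul_of_nonneg_right h4 (sq_nonneg (w k))
  set C : ℝ := t ^ 4 - a - δ - 1 / (2 * α₁) * t ^ 3 with hCdef
  have hC0 : 0 ≤ C := hpos
  -- pointwise bound
  have hkey : ∀ k : ℕ,
      2 * ((-((((k : ℝ) + (N : ℝ) + 1) ^ 2 * π ^ 2) ^ 2)
          + (a + δ) * (((k : ℝ) + (N : ℝ) + 1) ^ 2 * π ^ 2)) * (w k) ^ 2)
        - 2 * ((((k : ℝ) + (N : ℝ) + 1) ^ 2 * π ^ 2) * w k *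
          (Real.sqrt 2 / (((k : ℝ) + (N : ℝ) + 1) * π)) * κ)
        ≤ -2*C*((((k : ℝ) + (N : ℝ) + 1) ^ 2 * π ^ 2) * (w k)^2)
          + α₁*κ^2*(g k - g (k+1)) := by
    intro k
    have hb2 : (Real.sqrt 2 / (((k : ℝ) + (N : ℝ) + 1) * π))^2 = 2/(s k)^4 := by
      rw [div_pow, Real.sq_sqrt (by norm_num : (0:ℝ) ≤ 2)]
      congr 1
      rw [show (s k)^4 = ((s k)^2)^2 by ring, hs2 k]
    have hyoung : α₁*(s k)*(Real.sqrt 2 / (((k : ℝ) + (N : ℝ) + 1) * π))^2*κ^2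
        = α₁*κ^2*(2/(s k)^3) := by
      rw [hb2]
      have := (hs0 k).ne'
      field_simp
    have hp := perterm a δ α₁ (s k) t (Real.sqrt 2 / (((k : ℝ) + (N : ℝ) + 1) * π)) (w k) κ
      hα₁ (hs0 k) (hst k)
    rw [hs4 k]
    have h2 : α₁*κ^2*(2/(s k)^3) ≤ α₁*κ^2*(g k - g (k+1)) :=
      mul_le_mul_of_nonneg_left (htele k) (by positivity)
    calc 2 * ((-(((s k)^4) ^ 2) + (a + δ) * ((s k)^4)) * (w k) ^ 2)
          - 2 * (((s k)^4) * w k * (Real.sqrt 2 / (((k : ℝ) + (N : ℝ) + 1) * π)) * κ)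
        ≤ -2 * (t^4 - a - δ - 1/(2*α₁)*t^3) * ((s k)^4*(w k)^2)
          + α₁*(s k)*(Real.sqrt 2 / (((k : ℝ) + (N : ℝ) + 1) * π))^2*κ^2 := by
          have := hp; linarith
      _ ≤ -2*C*((s k)^4 * (w k)^2) + α₁*κ^2*(g k - g (k+1)) := by
          rw [hyoung, hCdef]; linarith
  -- summability of LHS pieces
  have hsum1 : Summable (fun k : ℕ => (-((((k : ℝ) + (N : ℝ) + 1) ^ 2 * π ^ 2) ^ 2)
      + (a + δ) * (((k : ℝ) + (N : ℝ) + 1) ^ 2 * π ^ 2)) * (w k) ^ 2) := by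
    apply Summable.congr (((hw.mul_left (-1)).add (hLw.mul_left (a+δ))))
    intro k; ring
  have hb2sum : Summable (fun k : ℕ =>
      (Real.sqrt 2 / (((k : ℝ) + (N : ℝ) + 1) * π))^2) := by
    apply Summable.of_nonneg_of_le (fun k => by positivity) _ htelsum
    intro k
    have hb2 : (Real.sqrt 2 / (((k : ℝ) + (N : ℝ) + 1) * π))^2 = 2/(s k)^4 := by
      rw [div_pow, Real.sq_sqrt (by norm_num : (0:ℝ) ≤ 2)]
      congr 1
      rw [show (s k)^4 = ((s k)^2)^2 by ring, hs2 k]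
    rw [hb2]
    refine le_trans ?_ (htele k)
    apply div_le_div_of_nonneg_left (by norm_num) (by positivity)
    exact pow_le_pow_right₀ (hs1 k) (by norm_num)
  have hsum2 : Summable (fun k : ℕ => (((k : ℝ) + (N : ℝ) + 1) ^ 2 * π ^ 2) * w k *
      (Real.sqrt 2 / (((k : ℝ) + (N : ℝ) + 1) * π)) * κ) := by
    rw [← summable_abs_iff]
    refine Summable.of_nonneg_of_le (fun k => abs_nonneg _) (fun k => ?_)
      ((hw.add hb2sum).mul_left |κ|)
    set L := (((k : ℝ) + (N : ℝ) + 1) ^ 2 * π ^ 2)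
    set bb := Real.sqrt 2 / (((k : ℝ) + (N : ℝ) + 1) * π)
    have h1 : |L * w k * bb * κ| = |κ| * (|L * w k| * |bb|) := by
      rw [abs_mul, abs_mul]; ring
    rw [h1]
    apply mul_le_mul_of_nonneg_left _ (abs_nonneg κ)
    nlinarith [sq_nonneg (|L * w k| - |bb|), sq_abs (L * w k), sq_abs bb,
      abs_nonneg (L * w k), abs_nonneg bb, sq_nonneg (L * w k)]
  have hsumB : Summable (fun k : ℕ => -2*C*((((k : ℝ) + (N : ℝ) + 1) ^ 2 * π ^ 2) * (w k)^2)
      + α₁*κ^2*(g k - g (k+1))) := by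
    exact (hLw.mul_left (-2*C)).add (htelsum.mul_left (α₁*κ^2))
  -- main chain
  rw [← tsum_mul_left, ← tsum_mul_left,
     ← Summable.tsum_sub (hsum1.mul_left 2) (hsum2.mul_left 2)]
  have hstep : ∑' k : ℕ, (2 * ((-((((k : ℝ) + (N : ℝ) + 1) ^ 2 * π ^ 2) ^ 2)
          + (a + δ) * (((k : ℝ) + (N : ℝ) + 1) ^ 2 * π ^ 2)) * (w k) ^ 2)
        - 2 * ((((k : ℝ) + (N : ℝ) + 1) ^ 2 * π ^ 2) * w k *
          (Real.sqrt 2 / (((k : ℝ) + (N : ℝ) + 1) * π)) * κ))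
      ≤ ∑' k : ℕ, (-2*C*((((k : ℝ) + (N : ℝ) + 1) ^ 2 * π ^ 2) * (w k)^2)
          + α₁*κ^2*(g k - g (k+1))) :=
    Summable.tsum_le_tsum hkey ((hsum1.mul_left 2).sub (hsum2.mul_left 2)) hsumB
  refine le_trans hstep ?_
  have hBsplit : ∑' k : ℕ, (-2*C*((((k : ℝ) + (N : ℝ) + 1) ^ 2 * π ^ 2) * (w k)^2)
          + α₁*κ^2*(g k - g (k+1)))
      = -2*C*(∑' k : ℕ, (((k : ℝ) + (N : ℝ) + 1) ^ 2 * π ^ 2) * (w k)^2)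
      + α₁*κ^2*(∑' k : ℕ, (g k - g (k+1))) := by
    rw [Summable.tsum_add (hLw.mul_left (-2*C)) (htelsum.mul_left (α₁*κ^2)),
      tsum_mul_left, tsum_mul_left]
  rw [hBsplit]
  have hA : -2*C*(∑' k : ℕ, (((k : ℝ) + (N : ℝ) + 1) ^ 2 * π ^ 2) * (w k)^2) ≤ -2*C*ζ^2 := by
    nlinarith [hζ, hC0]
  have hg0 : g 0 = 4/p32 * (1/Real.sqrt (N:ℝ)) := by
    rw [hgdef]; norm_num
  have hB2 : α₁*κ^2*(∑' k : ℕ, (g k - g (k+1))) ≤ (4 * α₁ / (Real.sqrt (N : ℝ) * p32)) * κ ^ 2 := by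
    have h1 : α₁*κ^2*(∑' k : ℕ, (g k - g (k+1))) ≤ α₁*κ^2*(g 0) :=
      mul_le_mul_of_nonneg_left htel_tsum_le (by positivity)
    refine le_trans h1 ?_
    rw [hg0]
    have hsN : 0 < Real.sqrt (N:ℝ) := Real.sqrt_pos.2 hN0
    rw [show α₁*κ^2*(4/p32 * (1/Real.sqrt (N:ℝ)))
      = (4 * α₁ / (Real.sqrt (N : ℝ) * p32)) * κ ^ 2 by field_simp]
  exact add_le_add hA hB2
end

section
/- Let N₀ be a positive integer, a ∈ ℝ, λ_n = n²π² and b_n = √2/(nπ) ≠ 0 for 1 ≤ n ≤ N₀. Define Ã₀ ∈ ℝ^{(N₀+1)×(N₀+1)} as the block matrix with zero first row, first column (0, a·b₁, …, a·b_{N₀})ᵀ, and lower-right block A₀ = diag(−λ₁ + a, …, −λ_{N₀} + a); define B̃₀ = (1, −b₁, …, −b_{N₀})ᵀ ∈ ℝ^{N₀+1}. Then the pair (Ã₀, B̃₀) is controllable; equivalently (Hautus test), for every μ ∈ ℝ and every y ∈ ℝ^{N₀+1}, if yᵀÃ₀ = μ·yᵀ and yᵀB̃₀ = 0 then y = 0.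 -/
open Real Matrix

/-- With `Ã₀` the dynamic-extension matrix (zero first row, first column
`(0, ab₁, …, ab_{N₀})ᵀ`, lower-right block `diag(−λ₁+a, …, −λ_{N₀}+a)`) and
`B̃₀ = (1, −b₁, …, −b_{N₀})ᵀ`, where `λ_n = n²π²` and `b_n = √2/(nπ) ≠ 0`, the
pair `(Ã₀, B̃₀)` is controllable: by the Hautus test, for every real `μ` and every
`y`, `yᵀÃ₀ = μyᵀ` and `yᵀB̃₀ = 0` imply `y = 0`. -/
theorem stmt_9 (N₀ : ℕ) (hN₀ : 0 < N₀) (a : ℝ)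
    (A : Matrix (Fin (N₀ + 1)) (Fin (N₀ + 1)) ℝ)
    (hA : A = Matrix.of fun i j : Fin (N₀ + 1) =>
      if i = 0 then 0
      else if j = 0 then a * (Real.sqrt 2 / (((i : ℕ) : ℝ) * π))
      else if i = j then -((((i : ℕ) : ℝ)) ^ 2 * π ^ 2) + a
      else 0)
    (B : Fin (N₀ + 1) → ℝ)
    (hB : B = fun i : Fin (N₀ + 1) =>
      if i = 0 then 1 else -(Real.sqrt 2 / (((i : ℕ) : ℝ) * π))) :
    ∀ (μ : ℝ) (y : Fin (N₀ + 1) → ℝ), Matrix.vecMul y A = μ • y → y ⬝ᵥ B = 0 → y = 0 := by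
  subst hA hB
  intro μ y h1 h2
  have hπ : (π : ℝ) ≠ 0 := Real.pi_ne_zero
  -- eigen equation at nonzero columns
  have key : ∀ j : Fin (N₀ + 1), j ≠ 0 →
      y j * (-((((j : ℕ) : ℝ)) ^ 2 * π ^ 2) + a) = μ * y j := by
    intro j hj
    have h := congrFun h1 j
    simp only [Matrix.vecMul, dotProduct, Matrix.of_apply, Pi.smul_apply,
      smul_eq_mul] at h
    rw [Finset.sum_eq_single j] at h
    · simpa [hj] using h
    · intro i _ hij
      by_cases hi : i = 0
      · simp [hi]
      · simp [hi, hj, hij]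
    · simp
  by_cases hall : ∀ j : Fin (N₀ + 1), j ≠ 0 → y j = 0
  · -- all nonzero-index entries vanish; B equation forces y 0 = 0
    have h0 : y 0 = 0 := by
      simp only [dotProduct] at h2
      rw [Fin.sum_univ_succ] at h2
      rw [Finset.sum_eq_zero (fun i _ => by
        rw [hall i.succ (Fin.succ_ne_zero i)]; ring)] at h2
      simpa using h2
    funext j
    by_cases hj : j = 0
    · simpa [hj] using h0
    · simpa using hall j hj
  · exfalso
    push_neg at hall
    obtain ⟨k, hk0, hk⟩ := hall
    -- μ equals the k-th eigenvalue
    have hμ : μ = -((((k : ℕ) : ℝ)) ^ 2 * π ^ 2) + a := by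
      have := key k hk0
      field_simp at this
      rcases mul_eq_mul_right_iff.mp (by rw [this] :
          (-((((k : ℕ) : ℝ)) ^ 2 * π ^ 2) + a) * y k = μ * y k) with h | h
      · exact h.symm
      · exact absurd h hk
    -- all other nonzero-index entries vanish
    have hkpos : (0 : ℝ) < ((k : ℕ) : ℝ) := by
      have : (0 : ℕ) < (k : ℕ) := Nat.pos_of_ne_zero (fun h => hk0 (Fin.ext h))
      exact_mod_cast this
    have hlam : (0 : ℝ) < (((k : ℕ) : ℝ)) ^ 2 * π ^ 2 :=
      mul_pos (pow_pos hkpos 2) (pow_pos Real.pi_pos 2)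
    have hothers : ∀ j : Fin (N₀ + 1), j ≠ 0 → j ≠ k → y j = 0 := by
      intro j hj0 hjk
      have h := key j hj0
      rw [hμ] at h
      have hne : (((j : ℕ) : ℝ)) ^ 2 ≠ (((k : ℕ) : ℝ)) ^ 2 := by
        intro hcontra
        have : ((j : ℕ) : ℝ) = ((k : ℕ) : ℝ) := by
          have hj' : (0:ℝ) ≤ ((j : ℕ) : ℝ) := Nat.cast_nonneg _
          have hk' : (0:ℝ) ≤ ((k : ℕ) : ℝ) := Nat.cast_nonneg _
          nlinarith
        exact hjk (Fin.ext (by exact_mod_cast this))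
      have hd : -((((j : ℕ) : ℝ)) ^ 2 * π ^ 2) + a ≠
          -((((k : ℕ) : ℝ)) ^ 2 * π ^ 2) + a := by
        intro hcontra
        apply hne
        have := mul_right_cancel₀ (pow_ne_zero 2 hπ) (by linarith :
          (((j : ℕ) : ℝ)) ^ 2 * π ^ 2 = (((k : ℕ) : ℝ)) ^ 2 * π ^ 2)
        exact this
      rcases mul_eq_mul_right_iff.mp (by linarith : (-((((j : ℕ) : ℝ)) ^ 2 * π ^ 2) + a) * y j
          = (-((((k : ℕ) : ℝ)) ^ 2 * π ^ 2) + a) * y j) with h' | h'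
      · exact absurd h' hd
      · exact h'
    obtain ⟨k', hk'⟩ := Fin.eq_succ_of_ne_zero hk0
    set b : ℝ := Real.sqrt 2 / (((k : ℕ) : ℝ) * π) with hbdef
    have hb : b ≠ 0 := by
      apply div_ne_zero
      · positivity
      · exact mul_ne_zero (ne_of_gt hkpos) hπ
    -- equation at column 0
    have e0 : y k * (a * b) = μ * y 0 := by
      have h := congrFun h1 0
      simp only [Matrix.vecMul, dotProduct, Matrix.of_apply, Pi.smul_apply,
        smul_eq_mul] at h
      rw [Fin.sum_univ_succ] at h
      rw [Finset.sum_eq_single k'] at h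
      · rw [hbdef, hk']
        simpa [Fin.succ_ne_zero, Fin.val_succ] using h
      · intro i _ hik
        by_cases hi0 : (i.succ : Fin (N₀+1)) = 0
        · simp [hi0]
        · rw [hothers i.succ (Fin.succ_ne_zero i) (by rw [hk']; exact fun h => hik (Fin.succ_injective _ h))]
          ring
      · simp
    -- the B equation
    have eB : y 0 = y k * b := by
      simp only [dotProduct] at h2
      rw [Fin.sum_univ_succ] at h2
      rw [Finset.sum_eq_single k'] at h2
      · have := h2
        simp only [Fin.succ_ne_zero, if_neg, if_pos, ← hk'] at this
        simp only [if_neg hk0] at this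
        have h00 : y 0 * (if (0 : Fin (N₀+1)) = 0 then (1:ℝ)
            else -(Real.sqrt 2 / (((0 : Fin (N₀+1)) : ℕ) * π))) = y 0 := by simp
        nlinarith [this]
      · intro i _ hik
        rw [hothers i.succ (Fin.succ_ne_zero i) (by rw [hk']; exact fun h => hik (Fin.succ_injective _ h))]
        ring
      · simp
    rw [eB, hμ] at e0
    have : y k * b * (((k : ℕ) : ℝ) ^ 2 * π ^ 2) = 0 := by ring_nf; ring_nf at e0; linarith
    have := mul_eq_zero.mp this
    rcases this with h' | h'
    · rcases mul_eq_zero.mp h' with h'' | h''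
      · exact hk h''
      · exact hb h''
    · exact (ne_of_gt hlam) h'
end

section
/- (Halanay's inequality for Lyapunov functions with non-increasing jumps.) Let s₀ < s₁ < … < s_k < … with lim_{k→∞} s_k = ∞ and s_{k+1} − s_k ≤ h for all k and some h > 0. For each k, let s_k = t^{(k)}_0 < t^{(k)}_1 < … < t^{(k)}_{n_k} = s_{k+1} be a finite refinement. Let W : [s₀, ∞) → [0, ∞) be absolutely continuous on each interval [t^{(k)}_j, t^{(k)}_{j+1}) and satisfy lim_{t↑t^{(k)}_j} W(t) ≥ W(t^{(k)}_j) at every partition point (jumps do not increase W). Let δ₀ > δ₁ > 0 and suppose that for every k and every 0 ≤ j ≤ n_k − 1, Ẇ(t) ≤ −2δ₀·W(t) + 2δ₁·sup_{s_k ≤ θ ≤ t} W(θ) for almost all t ∈ [t^{(k)}_j, t^{(k)}_{j+1}). Let δ_τ > 0 be the unique solution of δ_τ = δ₀ − δ₁·e^{2δ_τ h}. Then W(t) ≤ e^{−2δ_τ·(t − s₀)}·W(s₀) for all t ≥ s₀. -/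
open Real MeasureTheory Filter

set_option maxHeartbeats 1600000 in
/-- Halanay's inequality for Lyapunov functions with non-increasing jumps.
`s k` are the sampling instances (with gaps at most `h`, tending to `∞`), and for each
`k` the points `t k 0 = s k < t k 1 < … < t k (n k) = s (k+1)` form a finite refinement.
`W ≥ 0` is absolutely continuous on each `[t k j, t k (j+1))` with a.e. derivative `W'`,
does not grow at the jump points, and satisfies the Halanay differential inequality
`W' ≤ −2δ₀ W + 2δ₁ sup_{[s k, ·]} W` a.e. on each of these intervals. If `δ₀ > δ₁ > 0`
and `δ_τ > 0` solves `δ_τ = δ₀ − δ₁ e^{2δ_τ h}`, then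
`W(t) ≤ e^{−2δ_τ(t − s 0)} W(s 0)` for all `t ≥ s 0`. -/
theorem stmt_10 (h δ₀ δ₁ δτ : ℝ) (hh : 0 < h) (hδ₁ : 0 < δ₁) (hδ₀ : δ₁ < δ₀)
    (s : ℕ → ℝ) (hs_mono : StrictMono s)
    (hs_tend : Tendsto s atTop atTop)
    (hs_gap : ∀ k : ℕ, s (k + 1) - s k ≤ h)
    (n : ℕ → ℕ) (hn : ∀ k, 1 ≤ n k)
    (t : ℕ → ℕ → ℝ)
    (ht0 : ∀ k, t k 0 = s k) (htn : ∀ k, t k (n k) = s (k + 1))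
    (ht_mono : ∀ k, ∀ i j : ℕ, i < j → j ≤ n k → t k i < t k j)
    (W W' : ℝ → ℝ)
    (hW_nonneg : ∀ x, s 0 ≤ x → 0 ≤ W x)
    (hAC : ∀ k, ∀ j < n k, ∀ x ∈ Set.Ico (t k j) (t k (j + 1)),
      IntervalIntegrable W' MeasureTheory.volume (t k j) x ∧
        W x = W (t k j) + ∫ τ in (t k j)..x, W' τ)
    (hjump : ∀ k, ∀ j ≤ n k, (k, j) ≠ (0, 0) →
      ∃ L : ℝ, Tendsto W (nhdsWithin (t k j) (Set.Iio (t k j))) (nhds L) ∧ W (t k j) ≤ L)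
    (hineq : ∀ k, ∀ j < n k, ∀ᵐ x ∂MeasureTheory.volume,
      x ∈ Set.Ico (t k j) (t k (j + 1)) →
        W' x ≤ -2 * δ₀ * W x + 2 * δ₁ * sSup (W '' Set.Icc (s k) x))
    (hδτ : 0 < δτ) (hδτ_eq : δτ = δ₀ - δ₁ * Real.exp (2 * δτ * h)) :
    ∀ x, s 0 ≤ x → W x ≤ Real.exp (-2 * δτ * (x - s 0)) * W (s 0) := by
  classical
  have hδ0pos : (0:ℝ) < δ₀ := hδ₁.trans hδ₀
  have hδτh : δ₁ * Real.exp (2 * δτ * h) = δ₀ - δτ := by linarith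
  have hs0le : ∀ k, s 0 ≤ s k := fun k => hs_mono.monotone (Nat.zero_le k)
  have ht_ge : ∀ k j, j ≤ n k → s k ≤ t k j := by
    intro k j hj
    rcases Nat.eq_zero_or_pos j with rfl | hjpos
    · rw [ht0]
    · rw [← ht0 k]; exact (ht_mono k 0 j hjpos hj).le
  have ht_le : ∀ k j, j ≤ n k → t k j ≤ s (k + 1) := by
    intro k j hj
    rcases eq_or_lt_of_le hj with rfl | hjlt
    · rw [htn]
    · rw [← htn k]; exact (ht_mono k j (n k) hjlt le_rfl).le
  have ht_lt : ∀ k j, j < n k → t k j < t k (j + 1) := fun k j hj =>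
    ht_mono k j (j + 1) (Nat.lt_succ_self j) hj
  -- continuity of W on each piece
  have hWcont : ∀ k j, j < n k → ContinuousOn W (Set.Ico (t k j) (t k (j + 1))) := by
    intro k j hj x hx
    obtain ⟨hax, hxb⟩ := hx
    set a := t k j
    set b := t k (j + 1)
    set x' := (x + b) / 2 with hx'def
    have hxx' : x < x' := by simp only [hx'def]; linarith
    have hx'b : x' < b := by simp only [hx'def]; linarith
    have hax' : a ≤ x' := hax.trans hxx'.le
    have hint : IntervalIntegrable W' volume a x' := (hAC k j hj x' ⟨hax', hx'b⟩).1
    have hcontP : ContinuousOn (fun y => W a + ∫ τ in a..y, W' τ) (Set.Icc a x') := by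
      have h1 := intervalIntegral.continuousOn_primitive_interval
        (μ := volume) (f := W') (a := a) (b := x') (by
          rw [Set.uIcc_of_le hax']
          exact (intervalIntegrable_iff_integrableOn_Icc_of_le hax').1 hint)
      rw [Set.uIcc_of_le hax'] at h1
      exact continuousOn_const.add h1
    have hEq : Set.EqOn W (fun y => W a + ∫ τ in a..y, W' τ) (Set.Icc a x') := by
      intro y hy
      exact (hAC k j hj y ⟨hy.1, lt_of_le_of_lt hy.2 hx'b⟩).2
    have h1 : ContinuousWithinAt W (Set.Icc a x') x :=
      (hcontP x ⟨hax, hxx'.le⟩).congr hEq (hEq ⟨hax, hxx'.le⟩)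
    apply h1.mono_of_mem_nhdsWithin
    have h2 : Set.Iic x' ∈ nhdsWithin x (Set.Ico a b) :=
      mem_nhdsWithin_of_mem_nhds (Iic_mem_nhds hxx')
    have h3 : Set.Ico a b ∈ nhdsWithin x (Set.Ico a b) := self_mem_nhdsWithin
    filter_upwards [h2, h3] with y hy1 hy2
    exact ⟨hy2.1, hy1⟩
  -- covering lemma
  have hcover : ∀ x, s 0 ≤ x → ∃ k j, j < n k ∧ x ∈ Set.Ico (t k j) (t k (j + 1)) := by
    intro x hx
    obtain ⟨K, hK⟩ := (hs_tend.eventually (eventually_gt_atTop x)).exists_forall_of_atTop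
    set k := Nat.findGreatest (fun m => s m ≤ x) K with hk
    have hkK : k ≤ K := Nat.findGreatest_le (P := fun m => s m ≤ x) K
    have hkx : s k ≤ x :=
      Nat.findGreatest_spec (P := fun m => s m ≤ x) (Nat.zero_le K) hx
    have hkK' : k < K := by
      rcases lt_or_eq_of_le hkK with h' | h'
      · exact h'
      · exact absurd (h' ▸ hkx) (not_le.2 (hK K le_rfl))
    have hxk1 : x < s (k + 1) := by
      by_contra hc
      push_neg at hc
      exact Nat.findGreatest_is_greatest (P := fun m => s m ≤ x)
        (Nat.lt_succ_self k) hkK' hc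
    set j := Nat.findGreatest (fun m => t k m ≤ x) (n k) with hj
    have hjn : j ≤ n k := Nat.findGreatest_le (P := fun m => t k m ≤ x) (n k)
    have hjx : t k j ≤ x :=
      Nat.findGreatest_spec (P := fun m => t k m ≤ x) (Nat.zero_le (n k))
        (by show t k 0 ≤ x; rw [ht0]; exact hkx)
    have hjn' : j < n k := by
      rcases lt_or_eq_of_le hjn with h' | h'
      · exact h'
      · exfalso; rw [h', htn] at hjx; exact absurd hjx (not_le.2 hxk1)
    refine ⟨k, j, hjn', hjx, ?_⟩
    by_contra hc
    push_neg at hc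
    exact Nat.findGreatest_is_greatest (P := fun m => t k m ≤ x)
      (Nat.lt_succ_self j) hjn' hc
  -- left piece lemma
  have hleft : ∀ T, s 0 < T → ∃ k j, j < n k ∧ t k j < T ∧ T ≤ t k (j + 1) := by
    intro T hT
    obtain ⟨K, hK⟩ := (hs_tend.eventually (eventually_gt_atTop T)).exists_forall_of_atTop
    set k := Nat.findGreatest (fun m => s m < T) K with hk
    have hkK : k ≤ K := Nat.findGreatest_le (P := fun m => s m < T) K
    have hkx : s k < T :=
      Nat.findGreatest_spec (P := fun m => s m < T) (Nat.zero_le K) hT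
    have hkK' : k < K := by
      rcases lt_or_eq_of_le hkK with h' | h'
      · exact h'
      · exact absurd (h' ▸ hkx) (not_lt.2 (hK K le_rfl).le)
    have hxk1 : T ≤ s (k + 1) := by
      by_contra hc
      push_neg at hc
      exact Nat.findGreatest_is_greatest (P := fun m => s m < T)
        (Nat.lt_succ_self k) hkK' hc
    set j := Nat.findGreatest (fun m => t k m < T) (n k) with hj
    have hjn : j ≤ n k := Nat.findGreatest_le (P := fun m => t k m < T) (n k)
    have hjx : t k j < T :=
      Nat.findGreatest_spec (P := fun m => t k m < T) (Nat.zero_le (n k))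
        (by show t k 0 < T; rw [ht0]; exact hkx)
    have hjn' : j < n k := by
      rcases lt_or_eq_of_le hjn with h' | h'
      · exact h'
      · exfalso; rw [h', htn] at hjx; exact absurd hjx (not_lt.2 hxk1)
    refine ⟨k, j, hjn', hjx, ?_⟩
    by_contra hc
    push_neg at hc
    exact Nat.findGreatest_is_greatest (P := fun m => t k m < T)
      (Nat.lt_succ_self j) hjn' hc
  -- main epsilon claim
  have main : ∀ ε : ℝ, 0 < ε → ∀ x, s 0 ≤ x →
      W x < (W (s 0) + ε) * Real.exp (-2 * δτ * (x - s 0)) := by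
    intro ε hε
    by_contra hcon
    push_neg at hcon
    set C := W (s 0) + ε with hCdef
    have hCpos : 0 < C := by
      have := hW_nonneg (s 0) le_rfl; simp only [hCdef]; linarith
    set B : ℝ → ℝ := fun x => C * Real.exp (-2 * δτ * (x - s 0)) with hBdef
    have hBpos : ∀ x, 0 < B x := fun x => mul_pos hCpos (Real.exp_pos _)
    have hBcont : Continuous B := by
      apply continuous_const.mul
      exact Real.continuous_exp.comp (continuous_const.mul (continuous_id.sub continuous_const))
    have hBanti : ∀ {x y : ℝ}, x ≤ y → B y ≤ B x := by
      intro x y hxy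
      apply mul_le_mul_of_nonneg_left _ hCpos.le
      apply Real.exp_le_exp.2
      nlinarith
    have hBder : ∀ x, HasDerivAt B (-2 * δτ * B x) x := by
      intro x
      have h1 : HasDerivAt (fun y => -2 * δτ * (y - s 0)) (-2 * δτ) x := by
        simpa using ((hasDerivAt_id x).sub_const (s 0)).const_mul (-2 * δτ)
      have h2 := (h1.exp).const_mul C
      convert h2 using 1
      · rfl
      · rfl
      · simp only [hBdef]; ring
    set A : Set ℝ := {x | s 0 ≤ x ∧ B x ≤ W x} with hAdef
    obtain ⟨z, hz1, hz2⟩ := hcon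
    have hA_ne : A.Nonempty := ⟨z, hz1, hz2⟩
    have hA_bdd : BddBelow A := ⟨s 0, fun a ha => ha.1⟩
    set T := sInf A with hTdef
    have hTge : s 0 ≤ T := le_csInf hA_ne fun a ha => ha.1
    have hlt : ∀ x, s 0 ≤ x → x < T → W x < B x := by
      intro x hx hxT
      by_contra hcw
      push_neg at hcw
      exact absurd (csInf_le hA_bdd ⟨hx, hcw⟩) (not_le.2 hxT)
    -- T > s 0
    have hTgt : s 0 < T := by
      have h00 : 0 < n 0 := hn 0
      have hb1 : s 0 < t 0 1 := by rw [← ht0 0]; exact ht_lt 0 0 h00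
      have hc0 : ContinuousWithinAt W (Set.Ico (t 0 0) (t 0 1)) (s 0) := by
        apply hWcont 0 0 h00
        rw [ht0]; exact ⟨le_rfl, hb1⟩
      rw [ht0] at hc0
      have hg0 : (0:ℝ) < B (s 0) - W (s 0) := by
        have h1 : B (s 0) = C := by rw [hBdef]; simp
        rw [h1, hCdef]; linarith
      have htend : Tendsto (fun y => B y - W y)
          (nhdsWithin (s 0) (Set.Ico (s 0) (t 0 1))) (nhds (B (s 0) - W (s 0))) :=
        ((hBcont.continuousWithinAt).sub hc0).tendsto
      have hev : ∀ᶠ y in nhdsWithin (s 0) (Set.Ico (s 0) (t 0 1)), 0 < B y - W y :=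
        htend.eventually (lt_mem_nhds hg0)
      obtain ⟨r, hr, hball⟩ := Metric.mem_nhdsWithin_iff.1 hev
      have hminT : min (s 0 + r) (t 0 1) ≤ T := by
        apply le_csInf hA_ne
        intro aa haa
        by_contra hc
        push_neg at hc
        have haa1 : aa < s 0 + r := lt_of_lt_of_le hc (min_le_left _ _)
        have haa2 : aa < t 0 1 := lt_of_lt_of_le hc (min_le_right _ _)
        have : aa ∈ Metric.ball (s 0) r ∩ Set.Ico (s 0) (t 0 1) := by
          constructor
          · rw [Metric.mem_ball, Real.dist_eq, abs_lt]
            constructor <;> linarith [haa.1]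
          · exact ⟨haa.1, haa2⟩
        have := hball this
        simp only [Set.mem_setOf_eq] at this
        linarith [haa.2]
      have hmin_gt : s 0 < min (s 0 + r) (t 0 1) := lt_min (by linarith) hb1
      linarith
    -- B T ≤ W T
    have hTW : B T ≤ W T := by
      by_cases hTA : T ∈ A
      · exact hTA.2
      · obtain ⟨k0, j0, hj0, hT0⟩ := hcover T hTge
        have hc0 : ContinuousWithinAt W (Set.Ico (t k0 j0) (t k0 (j0 + 1))) T :=
          hWcont k0 j0 hj0 T hT0
        have hu : ∀ m : ℕ, ∃ aa, aa ∈ A ∧ aa < T + 1 / (m + 1) := by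
          intro m
          apply exists_lt_of_csInf_lt hA_ne
          have : (0:ℝ) < 1 / (m + 1) := by positivity
          linarith
        choose u hu1 hu2 using hu
        have huT : ∀ m, T ≤ u m := fun m => csInf_le hA_bdd (hu1 m)
        have hutend : Tendsto u atTop (nhds T) := by
          apply tendsto_of_tendsto_of_tendsto_of_le_of_le (g := fun _ => T)
            (h := fun m : ℕ => T + 1 / (m + 1)) tendsto_const_nhds
          · have := tendsto_one_div_add_atTop_nhds_zero_nat.const_add T
            simpa using this
          · exact huT
          · exact fun m => (hu2 m).le
        have huev : ∀ᶠ m in atTop, u m ∈ Set.Ico (t k0 j0) (t k0 (j0 + 1)) := by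
          have h1 : ∀ᶠ m in atTop, u m < t k0 (j0 + 1) :=
            hutend.eventually_lt_const hT0.2
          filter_upwards [h1] with m hm
          exact ⟨hT0.1.trans (huT m), hm⟩
        have hWu : Tendsto (fun m => W (u m)) atTop (nhds (W T)) :=
          (hc0.tendsto).comp
            (tendsto_nhdsWithin_of_tendsto_nhds_of_eventually_within u hutend huev)
        have hBu : Tendsto (fun m => B (u m)) atTop (nhds (B T)) :=
          (hBcont.tendsto T).comp hutend
        exact le_of_tendsto_of_tendsto hBu hWu
          (Eventually.of_forall fun m => (hu1 m).2)
    -- the piece just to the left of T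
    obtain ⟨k, j, hj, haT, hTb⟩ := hleft T hTgt
    have hs0a : s 0 ≤ t k j := (hs0le k).trans (ht_ge k j hj.le)
    have hbs : t k (j + 1) ≤ s (k + 1) := ht_le k (j + 1) hj
    -- left limit of W at T equals B T
    obtain ⟨L, hLtend, hWL⟩ :
        ∃ L, Tendsto W (nhdsWithin T (Set.Iio T)) (nhds L) ∧ W T ≤ L := by
      rcases eq_or_lt_of_le hTb with hTb' | hTb'
      · obtain ⟨L, h1, h2⟩ := hjump k (j + 1) hj (by simp)
        rw [← hTb'] at h1 h2
        exact ⟨L, h1, h2⟩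
      · have hc := hWcont k j hj T ⟨haT.le, hTb'⟩
        refine ⟨W T, ?_, le_rfl⟩
        rw [← nhdsWithin_Ioo_eq_nhdsLT haT]
        exact (hc.tendsto).mono_left
          (nhdsWithin_mono _ fun y hy => ⟨hy.1.le, hy.2.trans hTb'⟩)
    have hevlt : ∀ᶠ y in nhdsWithin T (Set.Iio T), W y ≤ B y := by
      filter_upwards [Ioo_mem_nhdsLT_of_mem (Set.mem_Ioc.2 ⟨hTgt, le_rfl⟩)] with y hy
      exact (hlt y hy.1.le hy.2).le
    have hBTtend : Tendsto B (nhdsWithin T (Set.Iio T)) (nhds (B T)) :=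
      (hBcont.tendsto T).mono_left nhdsWithin_le_nhds
    have hLB : L = B T :=
      le_antisymm (le_of_tendsto_of_tendsto hLtend hBTtend hevlt) (hTW.trans hWL)
    have hgtend : Tendsto (fun y => B y - W y) (nhdsWithin T (Set.Iio T)) (nhds 0) := by
      have := hBTtend.sub hLtend
      rw [hLB, sub_self] at this
      exact this
    -- the key integral inequality
    have hkey : ∀ x y, t k j ≤ x → x ≤ y → y < T →
        B x - W x ≤ (B y - W y) + ∫ θ in x..y, 2 * δ₀ * (B θ - W θ) := by
      intro x y hax hxy hyT
      have hyb : y < t k (j + 1) := lt_of_lt_of_le hyT hTb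
      have hxmem : x ∈ Set.Ico (t k j) (t k (j + 1)) := ⟨hax, lt_of_le_of_lt hxy hyb⟩
      have hymem : y ∈ Set.Ico (t k j) (t k (j + 1)) := ⟨hax.trans hxy, hyb⟩
      obtain ⟨hintx, hWx⟩ := hAC k j hj x hxmem
      obtain ⟨hinty, hWy⟩ := hAC k j hj y hymem
      have hWdiff : W y - W x = ∫ θ in x..y, W' θ := by
        rw [hWx, hWy]
        rw [show (W (t k j) + ∫ τ in (t k j)..y, W' τ) - (W (t k j) + ∫ τ in (t k j)..x, W' τ)
          = (∫ τ in (t k j)..y, W' τ) - ∫ τ in (t k j)..x, W' τ from by ring]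
        exact intervalIntegral.integral_interval_sub_left hinty hintx
      have hintxy : IntervalIntegrable W' volume x y := by
        apply hinty.mono_set
        rw [Set.uIcc_of_le hxy, Set.uIcc_of_le (hax.trans hxy)]
        exact Set.Icc_subset_Icc hax le_rfl
      -- continuity of W and B on [x,y]
      have hsubIcc : Set.Icc x y ⊆ Set.Ico (t k j) (t k (j + 1)) := fun θ hθ =>
        ⟨hax.trans hθ.1, lt_of_le_of_lt hθ.2 hyb⟩
      have hWcxy : ContinuousOn W (Set.Icc x y) := (hWcont k j hj).mono hsubIcc
      set φ : ℝ → ℝ := fun θ => -2 * δ₀ * W θ + 2 * (δ₀ - δτ) * B θ with hφdef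
      have hφcont : ContinuousOn φ (Set.Icc x y) :=
        ((continuousOn_const.mul hWcxy).add
          (continuousOn_const.mul (hBcont.continuousOn)))
      have hφint : IntervalIntegrable φ volume x y := by
        apply ContinuousOn.intervalIntegrable
        rw [Set.uIcc_of_le hxy]; exact hφcont
      -- a.e. bound
      have haebound : W' ≤ᶠ[ae (volume.restrict (Set.Icc x y))] φ := by
        rw [EventuallyLE, ae_restrict_iff' measurableSet_Icc]
        filter_upwards [hineq k j hj] with θ hθ hmem
        have hθmem : θ ∈ Set.Ico (t k j) (t k (j + 1)) := hsubIcc hmem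
        have h1 := hθ hθmem
        have hskθ : s k ≤ θ := (ht_ge k j hj.le).trans (hax.trans hmem.1)
        have hθT : θ < T := lt_of_le_of_lt hmem.2 hyT
        have hsupb : sSup (W '' Set.Icc (s k) θ) ≤ B (s k) := by
          refine csSup_le ⟨W (s k), Set.mem_image_of_mem _ ⟨le_rfl, hskθ⟩⟩ ?_
          rintro v ⟨σ, hσ, rfl⟩
          have hσ0 : s 0 ≤ σ := (hs0le k).trans hσ.1
          have hσT : σ < T := lt_of_le_of_lt hσ.2 hθT
          exact (hlt σ hσ0 hσT).le.trans (hBanti hσ.1)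
        have hBsk : B (s k) ≤ Real.exp (2 * δτ * h) * B θ := by
          have e1 : Real.exp (-2 * δτ * (θ - s 0)) * Real.exp (2 * δτ * (θ - s k))
              = Real.exp (-2 * δτ * (s k - s 0)) := by
            rw [← Real.exp_add]; congr 1; ring
          have heq : B (s k) = B θ * Real.exp (2 * δτ * (θ - s k)) := by
            calc B (s k) = C * Real.exp (-2 * δτ * (s k - s 0)) := by simp only [hBdef]
              _ = C * (Real.exp (-2 * δτ * (θ - s 0)) * Real.exp (2 * δτ * (θ - s k))) := by
                  rw [e1]
              _ = B θ * Real.exp (2 * δτ * (θ - s k)) := by simp only [hBdef]; ring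
          rw [heq]
          have hθh : θ - s k ≤ h := by
            have h1 : θ < s (k + 1) := lt_of_lt_of_le (lt_of_lt_of_le hθT hTb) hbs
            have := hs_gap k
            linarith
          have : Real.exp (2 * δτ * (θ - s k)) ≤ Real.exp (2 * δτ * h) :=
            Real.exp_le_exp.2 (by nlinarith)
          nlinarith [hBpos θ]
        have hfin : 2 * δ₁ * sSup (W '' Set.Icc (s k) θ) ≤ 2 * (δ₀ - δτ) * B θ := by
          have h2 : 2 * δ₁ * sSup (W '' Set.Icc (s k) θ) ≤ 2 * δ₁ * (Real.exp (2 * δτ * h) * B θ) := by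
            apply mul_le_mul_of_nonneg_left (hsupb.trans hBsk) (by linarith)
          calc 2 * δ₁ * sSup (W '' Set.Icc (s k) θ)
              ≤ 2 * δ₁ * (Real.exp (2 * δτ * h) * B θ) := h2
            _ = 2 * (δ₁ * Real.exp (2 * δτ * h)) * B θ := by ring
            _ = 2 * (δ₀ - δτ) * B θ := by rw [hδτh]
        simp only [hφdef]
        linarith
      have hWint_le : (∫ θ in x..y, W' θ) ≤ ∫ θ in x..y, φ θ :=
        intervalIntegral.integral_mono_ae_restrict hxy hintxy hφint haebound
      -- B y - B x as integral
      have hBdiff : B y - B x = ∫ θ in x..y, -2 * δτ * B θ := by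
        rw [intervalIntegral.integral_eq_sub_of_hasDerivAt
          (fun θ _ => hBder θ)
          (by
            apply ContinuousOn.intervalIntegrable
            exact continuousOn_const.mul hBcont.continuousOn)]
      have hsplit : (∫ θ in x..y, 2 * δ₀ * (B θ - W θ))
          = (∫ θ in x..y, φ θ) - ∫ θ in x..y, -2 * δτ * B θ := by
        rw [← intervalIntegral.integral_sub hφint
          (by
            apply ContinuousOn.intervalIntegrable
            exact continuousOn_const.mul hBcont.continuousOn)]
        apply intervalIntegral.integral_congr
        intro θ _
        simp only [hφdef]
        ring
      have : W y - W x ≤ ∫ θ in x..y, φ θ := hWdiff ▸ hWint_le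
      rw [hsplit]
      linarith [hBdiff]
    -- Gronwall contradiction
    set x0 := max (t k j) (T - (8 * δ₀)⁻¹) with hx0def
    have hx0a : t k j ≤ x0 := le_max_left _ _
    have hx0T : x0 < T := by
      apply max_lt haT
      have : (0:ℝ) < (8 * δ₀)⁻¹ := by positivity
      linarith
    have hx0s0 : s 0 ≤ x0 := hs0a.trans hx0a
    have hfrac : 2 * δ₀ * (T - x0) ≤ 1 / 2 := by
      have h1 : T - x0 ≤ (8 * δ₀)⁻¹ := by
        have := le_max_right (t k j) (T - (8 * δ₀)⁻¹)
        simp only [hx0def] at *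
        linarith
      have h2 : 2 * δ₀ * (8 * δ₀)⁻¹ = 1 / 4 := by
        field_simp
        ring
      nlinarith
    set g : ℝ → ℝ := fun y => B y - W y with hgdef
    set S := g '' Set.Ico x0 T with hSdef
    have hS_ne : S.Nonempty := ⟨g x0, Set.mem_image_of_mem _ ⟨le_rfl, hx0T⟩⟩
    -- bddAbove S
    have hS_bdd : BddAbove S := by
      have hev1 : {y | g y ≤ 1} ∈ nhdsWithin T (Set.Iio T) := by
        have := hgtend.eventually_lt_const (one_pos)
        filter_upwards [this] with y hy using hy.le
      obtain ⟨l, hlT, hl⟩ := mem_nhdsLT_iff_exists_Ioo_subset.1 hev1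
      set y1 := max x0 l with hy1def
      have hy1T : y1 < T := max_lt hx0T hlT
      have hgc : ContinuousOn g (Set.Icc x0 y1) := by
        apply (hBcont.continuousOn).sub
        apply (hWcont k j hj).mono
        intro θ hθ
        exact ⟨hx0a.trans hθ.1, lt_of_le_of_lt hθ.2 (lt_of_lt_of_le hy1T hTb)⟩
      obtain ⟨M1, hM1⟩ := (isCompact_Icc.bddAbove_image hgc)
      refine ⟨max M1 1, ?_⟩
      rintro v ⟨θ, hθ, rfl⟩
      rcases le_or_gt θ y1 with hc | hc
      · exact le_trans (hM1 (Set.mem_image_of_mem _ ⟨hθ.1, hc⟩)) (le_max_left _ _)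
      · have : θ ∈ Set.Ioo l T := ⟨lt_of_le_of_lt (le_max_right x0 l) hc, hθ.2⟩
        exact le_trans (hl this) (le_max_right _ _)
    set M := sSup S with hMdef
    have hMpos : 0 < M := by
      have h1 : g x0 ≤ M := le_csSup hS_bdd (Set.mem_image_of_mem _ ⟨le_rfl, hx0T⟩)
      have h2 : 0 < g x0 := by
        simp only [hgdef]
        linarith [hlt x0 hx0s0 hx0T]
      linarith
    have hbound : ∀ x ∈ Set.Ico x0 T, g x ≤ M / 2 := by
      intro x hx
      have hev : ∀ᶠ y in nhdsWithin T (Set.Iio T), g x ≤ g y + M / 2 := by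
        filter_upwards [Ioo_mem_nhdsLT_of_mem (Set.mem_Ioc.2 ⟨hx.2, le_rfl⟩)] with y hy
        have hkxy := hkey x y (hx0a.trans hx.1) hy.1.le hy.2
        have hIle : (∫ θ in x..y, 2 * δ₀ * (B θ - W θ)) ≤ (y - x) * (2 * δ₀ * M) := by
          have h1 : (∫ θ in x..y, 2 * δ₀ * (B θ - W θ)) ≤ ∫ _ in x..y, 2 * δ₀ * M := by
            apply intervalIntegral.integral_mono_on hy.1.le
            · apply ContinuousOn.intervalIntegrable
              rw [Set.uIcc_of_le hy.1.le]
              apply continuousOn_const.mul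
              apply (hBcont.continuousOn).sub
              apply (hWcont k j hj).mono
              intro θ hθ
              exact ⟨hx0a.trans (hx.1.trans hθ.1),
                lt_of_le_of_lt hθ.2 (lt_of_lt_of_le hy.2 hTb)⟩
            · exact intervalIntegrable_const
            · intro θ hθ
              apply mul_le_mul_of_nonneg_left _ (by linarith)
              apply le_csSup hS_bdd
              exact Set.mem_image_of_mem _ ⟨hx.1.trans hθ.1, lt_of_le_of_lt hθ.2 hy.2⟩
          rw [intervalIntegral.integral_const] at h1
          simpa using h1
        have hyx : y - x ≤ T - x0 := by
          have h1 := hy.2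
          have h2 := hx.1
          linarith
        have : (y - x) * (2 * δ₀ * M) ≤ M / 2 := by
          have h2 : (y - x) * (2 * δ₀ * M) ≤ (T - x0) * (2 * δ₀ * M) := by
            apply mul_le_mul_of_nonneg_right hyx
            positivity
          nlinarith
        simp only [hgdef]
        linarith
      have htendM : Tendsto (fun y => g y + M / 2) (nhdsWithin T (Set.Iio T)) (nhds (0 + M / 2)) :=
        hgtend.add_const _
      have := ge_of_tendsto htendM hev
      linarith
    have hMle : M ≤ M / 2 := by
      apply csSup_le hS_ne
      rintro v ⟨θ, hθ, rfl⟩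
      exact hbound θ hθ
    linarith
  -- conclude
  intro x hx
  have hE : 0 < Real.exp (-2 * δτ * (x - s 0)) := Real.exp_pos _
  apply le_of_forall_pos_lt_add
  intro ε' hε'
  have hm := main (ε' / Real.exp (-2 * δτ * (x - s 0))) (by positivity) x hx
  calc W x < (W (s 0) + ε' / Real.exp (-2 * δτ * (x - s 0)))
        * Real.exp (-2 * δτ * (x - s 0)) := hm
    _ = Real.exp (-2 * δτ * (x - s 0)) * W (s 0) + ε' := by
        field_simp
end

section
/- Let N be a positive integer, a ∈ ℝ, δ > 0, α₁ > 0, λ_n = n²π², b_n = √2/(nπ). Let P ∈ ℝ^{(2N+1)×(2N+1)} be symmetric positive definite, F ∈ ℝ^{(2N+1)×(2N+1)}, 𝓛 ∈ ℝ^{2N+1} a column vector, K ∈ ℝ^{1×(2N+1)} a row vector. Set Φ = PF + FᵀP + 2δP + (4α₁/(√N·π^{3/2}))·KᵀK and assume the (2N+3)×(2N+3) block matrix [[Φ, P𝓛, 0], [𝓛ᵀP, −2(λ_{N+1} − a − δ), 1], [0, 1, −α₁·λ_{N+1}^{−3/4}]] is negative definite, and additionally λ_{N+1}^{1/4} ≥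 3/(8α₁). Then for every X ∈ ℝ^{2N+1}, every ζ ∈ ℝ, and every real sequence (w_n)_{n>N} with ∑_{n=N+1}^∞ λ_n²·w_n² < ∞ and ζ² ≤ ∑_{n=N+1}^∞ λ_n·w_n², it holds that Xᵀ(PF + FᵀP + 2δP)X + 2·XᵀP𝓛·ζ + 2·∑_{n=N+1}^∞ (−λ_n² + (a+δ)λ_n)·w_n² − 2·∑_{n=N+1}^∞ λ_n·b_n·w_n·(KX) ≤ 0. -/
open Real Matrix


private lemma tele_step (r : ℝ) (hr : 2 ≤ r) :
    r ^ (-(3:ℝ)/2) ≤ 2 * ((Real.sqrt (r-1))⁻¹ - (Real.sqrt r)⁻¹) := by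
  have hp : 0 < Real.sqrt (r-1) := Real.sqrt_pos.2 (by linarith)
  have hq : 0 < Real.sqrt r := Real.sqrt_pos.2 (by linarith)
  have hq2 : Real.sqrt r ^ 2 = r := Real.sq_sqrt (by linarith)
  have hp2 : Real.sqrt (r-1) ^ 2 = r - 1 := Real.sq_sqrt (by linarith)
  have hrw : r ^ (-(3:ℝ)/2) = (r * Real.sqrt r)⁻¹ := by
    rw [show (-(3:ℝ)/2) = -(1 + 1/2) by norm_num, Real.rpow_neg (by linarith),
      Real.rpow_add (by linarith : (0:ℝ) < r), Real.rpow_one, ← Real.sqrt_eq_rpow]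
  rw [hrw]
  set p := Real.sqrt (r-1) with hpdef
  set q := Real.sqrt r with hqdef
  have hple : p ≤ q := Real.sqrt_le_sqrt (by linarith)
  have h : (q - p) * (q + p) = 1 := by nlinarith
  rw [show (r*q)⁻¹ = 1/(q^3) by rw [← hq2]; ring,
      show 2*(p⁻¹ - q⁻¹) = 2*(q-p)/(p*q) by field_simp,
      div_le_div_iff₀ (by positivity) (by positivity)]
  nlinarith [h, mul_pos hp hq, mul_pos (mul_pos hq hq) hq, sq_nonneg (q-p),
    mul_nonneg (mul_nonneg (sub_nonneg.2 hple) hq.le) hq.le]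

private lemma tail_sum (N : ℕ) (hN : 0 < N) :
    Summable (fun k : ℕ => ((k:ℝ)+N+1) ^ (-(3:ℝ)/2)) ∧
    ∑' k : ℕ, ((k:ℝ)+N+1) ^ (-(3:ℝ)/2) ≤ 2 / Real.sqrt N := by
  have hN1 : (1:ℝ) ≤ (N:ℝ) := by exact_mod_cast hN
  set f : ℕ → ℝ := fun k => (Real.sqrt ((k:ℝ)+N))⁻¹ with hf
  have hstep : ∀ k : ℕ, ((k:ℝ)+N+1) ^ (-(3:ℝ)/2) ≤ 2*(f k - f (k+1)) := by
    intro k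
    have := tele_step ((k:ℝ)+N+1) (by push_cast; linarith [Nat.cast_nonneg (α := ℝ) k])
    simp only [hf]
    convert this using 3 <;> push_cast <;> ring
  have hpart : ∀ n : ℕ, ∑ k ∈ Finset.range n, ((k:ℝ)+N+1) ^ (-(3:ℝ)/2) ≤ 2 / Real.sqrt N := by
    intro n
    calc ∑ k ∈ Finset.range n, ((k:ℝ)+N+1) ^ (-(3:ℝ)/2)
        ≤ ∑ k ∈ Finset.range n, 2*(f k - f (k+1)) :=
          Finset.sum_le_sum fun k _ => hstep k
      _ = 2 * (f 0 - f n) := by rw [← Finset.mul_sum, Finset.sum_range_sub' f]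
      _ ≤ 2 * f 0 := by
          have : 0 ≤ f n := by positivity
          linarith
      _ = 2 / Real.sqrt N := by simp [hf]; ring
  have hnn : ∀ k : ℕ, 0 ≤ ((k:ℝ)+N+1) ^ (-(3:ℝ)/2) := fun k =>
    Real.rpow_nonneg (by positivity) _
  exact ⟨summable_of_sum_range_le hnn hpart, tsum_le_of_sum_range_le hnn hpart⟩

private lemma g_mono (α₁ A B : ℝ) (hα : 0 < α₁) (hB : 0 < B) (hAB : B ≤ A)
    (hb : 3/(8*α₁) ≤ B) :
    B^4 - B^3/(2*α₁) ≤ A^4 - A^3/(2*α₁) := by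
  have h8 : 3 ≤ 8*α₁*B := by
    rw [div_le_iff₀ (by positivity)] at hb; linarith
  have hA : 0 < A := lt_of_lt_of_le hB hAB
  have hbr : 0 ≤ 2*α₁*(A^3+A^2*B+A*B^2+B^3) - (A^2+A*B+B^2) := by
    nlinarith [mul_nonneg (mul_nonneg (sub_nonneg.2 hAB) hA.le) hA.le, sq_nonneg A, sq_nonneg B,
      mul_nonneg (sub_nonneg.2 hAB) (mul_nonneg hA.le hB.le), mul_pos hA hB]
  have key : 0 ≤ (A - B) * (2*α₁*(A^3+A^2*B+A*B^2+B^3) - (A^2+A*B+B^2)) :=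
    mul_nonneg (sub_nonneg.2 hAB) hbr
  have h2 : 0 < 2*α₁ := by linarith
  have expand : 2*α₁*(A^4 - A^3/(2*α₁)) - 2*α₁*(B^4 - B^3/(2*α₁))
      = (A-B)*(2*α₁*(A^3+A^2*B+A*B^2+B^3) - (A^2+A*B+B^2)) := by
    field_simp
    ring
  nlinarith [key, expand, h2]

private lemma per_term (α₁ a δ lam s W KX : ℝ) (hα : 0 < α₁) (hs : 0 < s) (hlam : s ≤ lam)
    (hmono : 3/(8*α₁) ≤ s ^ ((1:ℝ)/4)) :
    2*(-lam^2 + (a+δ)*lam)*W^2 - 2*Real.sqrt (2*lam)*W*KX ≤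
      -2*(s - (a+δ) - s^((3:ℝ)/4)/(2*α₁))*(lam*W^2) + 2*α₁*(lam^((3:ℝ)/4))⁻¹*KX^2 := by
  have hlam0 : 0 < lam := lt_of_lt_of_le hs hlam
  set A := lam ^ ((1:ℝ)/4) with hA
  set B := s ^ ((1:ℝ)/4) with hB
  have hA0 : 0 < A := Real.rpow_pos_of_pos hlam0 _
  have hB0 : 0 < B := Real.rpow_pos_of_pos hs _
  have hAB : B ≤ A := Real.rpow_le_rpow hs.le hlam (by norm_num)
  have hAu : lam ^ ((3:ℝ)/4) = A ^ 3 := by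
    rw [hA, ← Real.rpow_natCast (lam ^ ((1:ℝ)/4)) 3, ← Real.rpow_mul hlam0.le]
    norm_num
  have hBe : s ^ ((3:ℝ)/4) = B ^ 3 := by
    rw [hB, ← Real.rpow_natCast (s ^ ((1:ℝ)/4)) 3, ← Real.rpow_mul hs.le]
    norm_num
  have hA4 : lam = A ^ 4 := by
    rw [hA, ← Real.rpow_natCast (lam ^ ((1:ℝ)/4)) 4, ← Real.rpow_mul hlam0.le]
    norm_num
  have hB4 : s = B ^ 4 := by
    rw [hB, ← Real.rpow_natCast (s ^ ((1:ℝ)/4)) 4, ← Real.rpow_mul hs.le]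
    norm_num
  set u := lam ^ ((3:ℝ)/4) with hu
  set e := s ^ ((3:ℝ)/4) with he
  have hu0 : 0 < u := Real.rpow_pos_of_pos hlam0 _
  have he0 : 0 < e := Real.rpow_pos_of_pos hs _
  have hc0 : (0:ℝ) ≤ lam*u/α₁ := by positivity
  have hd0 : (0:ℝ) ≤ 2*α₁/u := by positivity
  have hcd : Real.sqrt (lam*u/α₁) * Real.sqrt (2*α₁/u) = Real.sqrt (2*lam) := by
    rw [← Real.sqrt_mul hc0]
    congr 1
    field_simp
  have young : -2*Real.sqrt (2*lam)*W*KX ≤ lam*u/α₁*W^2 + 2*α₁/u*KX^2 := by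
    have h := sq_nonneg (Real.sqrt (lam*u/α₁) * W + Real.sqrt (2*α₁/u) * KX)
    have e1 : Real.sqrt (lam*u/α₁) ^ 2 = lam*u/α₁ := Real.sq_sqrt hc0
    have e2 : Real.sqrt (2*α₁/u) ^ 2 = 2*α₁/u := Real.sq_sqrt hd0
    have hid : (Real.sqrt (lam*u/α₁) * W + Real.sqrt (2*α₁/u) * KX) ^ 2
        = Real.sqrt (lam*u/α₁)^2*W^2 + Real.sqrt (2*α₁/u)^2*KX^2
          + 2*(Real.sqrt (lam*u/α₁) * Real.sqrt (2*α₁/u))*(W*KX) := by ring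
    rw [hid, e1, e2, hcd] at h
    linarith
  have mono : s - e/(2*α₁) ≤ lam - u/(2*α₁) := by
    rw [hAu, hBe, hA4, hB4]
    exact g_mono α₁ A B hα hB0 hAB (hmono.trans_eq hB)
  have mono' : s - (a+δ) - e/(2*α₁) ≤ lam - (a+δ) - u/(2*α₁) := by linarith
  have hGle : -(2*lam*W^2*(lam - (a+δ) - u/(2*α₁))) ≤ -(2*lam*W^2*(s - (a+δ) - e/(2*α₁))) :=
    neg_le_neg (mul_le_mul_of_nonneg_left mono' (by positivity))
  calc 2*(-lam^2 + (a+δ)*lam)*W^2 - 2*Real.sqrt (2*lam)*W*KX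
      = (-2*lam*(lam-(a+δ))*W^2) + (-2*Real.sqrt (2*lam)*W*KX) := by ring
    _ ≤ (-2*lam*(lam-(a+δ))*W^2) + (lam*u/α₁*W^2 + 2*α₁/u*KX^2) := by linarith [young]
    _ = -(2*lam*W^2*(lam - (a+δ) - u/(2*α₁))) + 2*α₁*u⁻¹*KX^2 := by
        field_simp
        ring
    _ ≤ -(2*lam*W^2*(s - (a+δ) - e/(2*α₁))) + 2*α₁*u⁻¹*KX^2 := by linarith [hGle]
    _ = -2*(s - (a+δ) - e/(2*α₁))*(lam*W^2) + 2*α₁*u⁻¹*KX^2 := by ring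


private lemma quadform (n : ℕ) (P Φ : Matrix (Fin n) (Fin n) ℝ) (L : Fin n → ℝ)
    (m22 m23 m33 : ℝ)
    (M : Matrix (Fin n ⊕ Fin 2) (Fin n ⊕ Fin 2) ℝ)
    (hM : M = Matrix.fromBlocks Φ
      (Matrix.of fun i (j : Fin 2) => if j = 0 then P.mulVec L i else 0)
      (Matrix.of fun (i : Fin 2) j => if i = 0 then P.mulVec L j else 0)
      !![m22, m23; m23, m33]) :
    ∀ (Y : Fin n → ℝ) (y z : ℝ),
      (Sum.elim Y ![y, z]) ⬝ᵥ M.mulVec (Sum.elim Y ![y, z])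
        = Y ⬝ᵥ Φ.mulVec Y + 2*(Y ⬝ᵥ P.mulVec L)*y
          + m22*y^2 + 2*m23*y*z + m33*z^2 := by
  intro Y y z
  subst hM
  simp [Matrix.fromBlocks_mulVec, dotProduct, Fintype.sum_sum_type,
    Matrix.mulVec, Fin.sum_univ_two, Finset.mul_sum, Finset.sum_mul,
    dotProduct_comm, Finset.sum_add_distrib]
  ring_nf
  simp [Finset.mul_sum]
  ring_nf
  simp only [Finset.sum_add_distrib, Finset.sum_sub_distrib]
  have h2 : ∑ x : Fin n, ∑ x1 : Fin n, (2:ℝ) * Y x * P x x1 * L x1 * y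
      = (∑ x : Fin n, ∑ x1 : Fin n, y * P x x1 * L x1 * Y x)
        + ∑ x : Fin n, ∑ x1 : Fin n, Y x * P x x1 * L x1 * y := by
    rw [← Finset.sum_add_distrib]
    refine Finset.sum_congr rfl fun x _ => ?_
    rw [← Finset.sum_add_distrib]
    exact Finset.sum_congr rfl fun x1 _ => by ring
  have h3 : ∑ x : Fin n, ∑ x1 : Fin n, y * P x x1 * L x1 * Y x
      = ∑ x : Fin n, ∑ x1 : Fin n, y * Y x * P x x1 * L x1 :=
    Finset.sum_congr rfl fun x _ => Finset.sum_congr rfl fun x1 _ => by ring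
  have h4 : ∑ x : Fin n, ∑ x1 : Fin n, y * Y x * P x x1 * L x1 * 2
      = (∑ x : Fin n, ∑ x1 : Fin n, y * Y x * P x x1 * L x1) * 2 := by
    rw [Finset.sum_mul]
    exact Finset.sum_congr rfl fun x _ => by rw [Finset.sum_mul]
  linarith [h2, h3, h4]

set_option maxHeartbeats 1000000 in
/-- The LMI (23): with `λ_n = n²π²`, `b_n = √2/(nπ)` (here index `k` stands for
`n = N+1+k`), `Φ = PF + FᵀP + 2δP + (4α₁/(√N π^{3/2}))KᵀK`, if the block matrix
`[[Φ, P𝓛, 0], [𝓛ᵀP, −2(λ_{N+1}−a−δ), 1], [0, 1, −α₁λ_{N+1}^{−3/4}]]` is negative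
definite and `λ_{N+1}^{1/4} ≥ 3/(8α₁)`, then for every `X`, `ζ` and tail sequence
`(w_n)_{n>N}` with `∑ λ_n² w_n² < ∞` and `ζ² ≤ ∑ λ_n w_n²`,
`Xᵀ(PF+FᵀP+2δP)X + 2XᵀP𝓛ζ + 2∑(−λ_n²+(a+δ)λ_n)w_n² − 2∑ λ_n b_n w_n (KX) ≤ 0`. -/
theorem stmt_12 (N : ℕ) (hN : 0 < N) (a δ α₁ : ℝ) (hδ : 0 < δ) (hα₁ : 0 < α₁)
    (P F : Matrix (Fin (2 * N + 1)) (Fin (2 * N + 1)) ℝ) (hP : P.PosDef)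
    (L K : Fin (2 * N + 1) → ℝ)
    (Φ : Matrix (Fin (2 * N + 1)) (Fin (2 * N + 1)) ℝ)
    (hΦ : Φ = P * F + Fᵀ * P + (2 * δ) • P
      + (4 * α₁ / (Real.sqrt (N : ℝ) * π ^ ((3 : ℝ) / 2))) • Matrix.vecMulVec K K)
    (M : Matrix (Fin (2 * N + 1) ⊕ Fin 2) (Fin (2 * N + 1) ⊕ Fin 2) ℝ)
    (hM : M = Matrix.fromBlocks Φ
      (Matrix.of fun i (j : Fin 2) => if j = 0 then P.mulVec L i else 0)
      (Matrix.of fun (i : Fin 2) j => if i = 0 then P.mulVec L j else 0)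
      !![-2 * (((N : ℝ) + 1) ^ 2 * π ^ 2 - a - δ), 1;
         1, -α₁ * ((((N : ℝ) + 1) ^ 2 * π ^ 2) ^ (-(3 / 4 : ℝ)))])
    (hLMI : (-M).PosDef)
    (hmono : ((((N : ℝ) + 1) ^ 2 * π ^ 2) ^ ((1 : ℝ) / 4)) ≥ 3 / (8 * α₁)) :
    ∀ (X : Fin (2 * N + 1) → ℝ) (ζ : ℝ) (w : ℕ → ℝ),
      Summable (fun k : ℕ => ((((k : ℝ) + (N : ℝ) + 1) ^ 2 * π ^ 2) ^ 2) * (w k) ^ 2) →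
      ζ ^ 2 ≤ ∑' k : ℕ, (((k : ℝ) + (N : ℝ) + 1) ^ 2 * π ^ 2) * (w k) ^ 2 →
      X ⬝ᵥ (P * F + Fᵀ * P + (2 * δ) • P).mulVec X
        + 2 * (X ⬝ᵥ P.mulVec L) * ζ
        + 2 * (∑' k : ℕ, (-((((k : ℝ) + (N : ℝ) + 1) ^ 2 * π ^ 2) ^ 2)
            + (a + δ) * (((k : ℝ) + (N : ℝ) + 1) ^ 2 * π ^ 2)) * (w k) ^ 2)
        - 2 * (∑' k : ℕ, (((k : ℝ) + (N : ℝ) + 1) ^ 2 * π ^ 2) *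
            (Real.sqrt 2 / (((k : ℝ) + (N : ℝ) + 1) * π)) * w k * (K ⬝ᵥ X))
      ≤ 0 := by
  intro X ζ w hsum hζ
  have hπ : (0:ℝ) < π := Real.pi_pos
  have hπ3 : (3:ℝ) < π := Real.pi_gt_three
  have hN1 : (1:ℝ) ≤ (N:ℝ) := by exact_mod_cast hN
  set KX := K ⬝ᵥ X with hKXdef
  set s : ℝ := ((N:ℝ)+1)^2 * π^2 with hsdef
  have hs0 : 0 < s := by rw [hsdef]; positivity
  set e : ℝ := s ^ ((3:ℝ)/4) with hedef
  have he0 : 0 < e := Real.rpow_pos_of_pos hs0 _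
  have hse : s ^ (-(3/4 : ℝ)) = e⁻¹ := by
    rw [hedef, ← Real.rpow_neg hs0.le]
  rw [hse] at hM
  -- basic positivity facts for the tail eigenvalues
  have hlam_pos : ∀ k : ℕ, (0:ℝ) < ((k:ℝ)+(N:ℝ)+1)^2 * π^2 := fun k => by positivity
  have hlam_ge : ∀ k : ℕ, s ≤ ((k:ℝ)+(N:ℝ)+1)^2 * π^2 := by
    intro k
    rw [hsdef]
    have hk : (0:ℝ) ≤ (k:ℝ) := Nat.cast_nonneg k
    have h1 : ((N:ℝ)+1)^2 ≤ ((k:ℝ)+(N:ℝ)+1)^2 := by nlinarith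
    exact mul_le_mul_of_nonneg_right h1 (sq_nonneg π)
  have hlam_ge1 : ∀ k : ℕ, (1:ℝ) ≤ ((k:ℝ)+(N:ℝ)+1)^2 * π^2 := by
    intro k
    have hk : (0:ℝ) ≤ (k:ℝ) := Nat.cast_nonneg k
    have h9 : (9:ℝ) ≤ π^2 := by nlinarith [hπ3]
    have hm1 : (1:ℝ) ≤ ((k:ℝ)+(N:ℝ)+1)^2 := by nlinarith
    nlinarith [hm1, h9]
  set G : ℝ := s - (a+δ) - e/(2*α₁) with hGdef
  -- quadratic form identity
  have hQ := quadform (2*N+1) P Φ L (-2 * (s - a - δ)) 1 (-α₁ * e⁻¹) M hM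
  -- G > 0 from the 2x2 south-east block of the LMI
  have hG0 : 0 < G := by
    set B : ℝ := α₁ * e⁻¹ with hBdef
    have hB0 : 0 < B := by rw [hBdef]; positivity
    have hv : Sum.elim (0 : Fin (2*N+1) → ℝ) ![B, 1] ≠ 0 := by
      intro h
      have := congrFun h (Sum.inr 1)
      simp at this
    have h1 := hLMI.dotProduct_mulVec_pos hv
    rw [star_trivial, Matrix.neg_mulVec, dotProduct_neg, hQ 0 B 1] at h1
    simp only [zero_dotProduct, dotProduct_zero] at h1
    have h2 : 1 < 2*(s-a-δ)*B := by nlinarith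
    have h3 : e * e⁻¹ = 1 := mul_inv_cancel₀ (ne_of_gt he0)
    rw [hBdef] at h2
    have h5 : e * (2*(s-a-δ)*(α₁*e⁻¹)) = (s-a-δ)*(2*α₁) := by
      field_simp
    have h6 := mul_lt_mul_of_pos_left h2 he0
    rw [mul_one] at h6
    have h4 : e/(2*α₁) < s - a - δ := by
      rw [div_lt_iff₀ (by positivity)]
      linarith [h6, h5]
    rw [hGdef]
    linarith
  -- summability facts
  have hbase : Summable (fun k : ℕ => 1/((k:ℝ)+1)^2) := by
    have h0 : Summable (fun n : ℕ => 1/(n:ℝ)^2) := Real.summable_one_div_nat_pow.mpr one_lt_two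
    exact ((summable_nat_add_iff 1).mpr h0).congr (fun n => by push_cast; ring)
  have hinv : Summable (fun k : ℕ => (((k:ℝ)+(N:ℝ)+1)^2*π^2)⁻¹) := by
    refine Summable.of_nonneg_of_le (fun k => by positivity) (fun k => ?_) hbase
    have hk : (0:ℝ) ≤ (k:ℝ) := Nat.cast_nonneg k
    rw [inv_eq_one_div, div_le_div_iff₀ (hlam_pos k) (by positivity)]
    have h9 : (9:ℝ) ≤ π^2 := by nlinarith [hπ3]
    have hmm : ((k:ℝ)+1)^2 ≤ ((k:ℝ)+(N:ℝ)+1)^2 := by nlinarith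
    nlinarith [mul_le_mul_of_nonneg_right hmm (sq_nonneg π), h9, sq_nonneg ((k:ℝ)+1)]
  have hlamw : Summable (fun k : ℕ => (((k:ℝ)+(N:ℝ)+1)^2*π^2) * (w k)^2) := by
    refine Summable.of_nonneg_of_le (fun k => by positivity) (fun k => ?_) hsum
    have h1 := hlam_ge1 k
    nlinarith [mul_nonneg (mul_nonneg (hlam_pos k).le (sub_nonneg.2 h1)) (sq_nonneg (w k))]
  have htail := tail_sum N hN
  have hrel : ∀ k : ℕ, (((((k:ℝ)+(N:ℝ)+1)^2*π^2) ^ ((3:ℝ)/4)))⁻¹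
      = (π ^ ((3:ℝ)/2))⁻¹ * (((k:ℝ)+(N:ℝ)+1) ^ (-(3:ℝ)/2)) := by
    intro k
    have hm0 : (0:ℝ) ≤ (k:ℝ)+(N:ℝ)+1 := by positivity
    have hupow : ((((k:ℝ)+(N:ℝ)+1)^2*π^2) ^ ((3:ℝ)/4))
        = ((k:ℝ)+(N:ℝ)+1) ^ ((3:ℝ)/2) * π ^ ((3:ℝ)/2) := by
      rw [show (((k:ℝ)+(N:ℝ)+1)^2*π^2) = (((k:ℝ)+(N:ℝ)+1)*π)^2 by ring,
          ← Real.rpow_natCast (((k:ℝ)+(N:ℝ)+1)*π) 2, ← Real.rpow_mul (by positivity),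
          Real.mul_rpow hm0 hπ.le]
      norm_num
    rw [hupow, mul_inv, show (-(3:ℝ)/2) = -((3:ℝ)/2) by norm_num,
        Real.rpow_neg hm0]
    ring
  have hu_sum : Summable (fun k : ℕ => (((((k:ℝ)+(N:ℝ)+1)^2*π^2) ^ ((3:ℝ)/4)))⁻¹) :=
    (htail.1.mul_left _).congr (fun k => (hrel k).symm)
  have hS3 : ∑' k : ℕ, (((((k:ℝ)+(N:ℝ)+1)^2*π^2) ^ ((3:ℝ)/4)))⁻¹
      ≤ 2 / (Real.sqrt (N:ℝ) * π ^ ((3:ℝ)/2)) := by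
    have hπ32 : (0:ℝ) < π ^ ((3:ℝ)/2) := Real.rpow_pos_of_pos hπ _
    have hsN : (0:ℝ) < Real.sqrt (N:ℝ) := Real.sqrt_pos.2 (by positivity)
    calc ∑' k : ℕ, (((((k:ℝ)+(N:ℝ)+1)^2*π^2) ^ ((3:ℝ)/4)))⁻¹
        = (π ^ ((3:ℝ)/2))⁻¹ * ∑' k : ℕ, ((k:ℝ)+(N:ℝ)+1) ^ (-(3:ℝ)/2) := by
          rw [tsum_congr hrel, tsum_mul_left]
      _ ≤ (π ^ ((3:ℝ)/2))⁻¹ * (2 / Real.sqrt (N:ℝ)) :=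
          mul_le_mul_of_nonneg_left htail.2 (by positivity)
      _ = 2 / (Real.sqrt (N:ℝ) * π ^ ((3:ℝ)/2)) := by
          field_simp
  -- summability of the cross term
  have hcr : Summable (fun k : ℕ => Real.sqrt (2*(((k:ℝ)+(N:ℝ)+1)^2*π^2)) * w k * KX) := by
    apply Summable.of_abs
    refine Summable.of_nonneg_of_le (fun k => abs_nonneg _) (fun k => ?_)
      ((hsum.add (hinv.mul_left 2)).mul_left |KX|)
    have hl := hlam_pos k
    have hx2 : Real.sqrt (2*(((k:ℝ)+(N:ℝ)+1)^2*π^2))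
        = Real.sqrt (2*((((k:ℝ)+(N:ℝ)+1)^2*π^2))⁻¹) * ((((k:ℝ)+(N:ℝ)+1)^2*π^2)) := by
      rw [show (2:ℝ)*(((k:ℝ)+(N:ℝ)+1)^2*π^2)
            = 2*((((k:ℝ)+(N:ℝ)+1)^2*π^2))⁻¹ * ((((k:ℝ)+(N:ℝ)+1)^2*π^2))^2 by
          field_simp,
        Real.sqrt_mul (by positivity), Real.sqrt_sq hl.le]
    rw [abs_mul, abs_mul, abs_of_nonneg (Real.sqrt_nonneg _)]
    have ht2 : (Real.sqrt (2*((((k:ℝ)+(N:ℝ)+1)^2*π^2))⁻¹))^2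
        = 2*((((k:ℝ)+(N:ℝ)+1)^2*π^2))⁻¹ := Real.sq_sqrt (by positivity)
    have hsq := sq_nonneg (Real.sqrt (2*((((k:ℝ)+(N:ℝ)+1)^2*π^2))⁻¹)
        - (((k:ℝ)+(N:ℝ)+1)^2*π^2) * |w k|)
    have key : Real.sqrt (2*(((k:ℝ)+(N:ℝ)+1)^2*π^2)) * |w k|
        ≤ ((((k:ℝ)+(N:ℝ)+1)^2*π^2))^2*(w k)^2 + 2*((((k:ℝ)+(N:ℝ)+1)^2*π^2))⁻¹ := by
      rw [hx2]
      nlinarith [hsq, ht2, sq_abs (w k), abs_nonneg (w k), hl,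
        mul_nonneg (Real.sqrt_nonneg (2*((((k:ℝ)+(N:ℝ)+1)^2*π^2))⁻¹))
          (mul_nonneg hl.le (abs_nonneg (w k)))]
    calc Real.sqrt (2*(((k:ℝ)+(N:ℝ)+1)^2*π^2)) * |w k| * |KX|
        ≤ (((((k:ℝ)+(N:ℝ)+1)^2*π^2))^2*(w k)^2 + 2*((((k:ℝ)+(N:ℝ)+1)^2*π^2))⁻¹) * |KX| :=
          mul_le_mul_of_nonneg_right key (abs_nonneg _)
      _ = |KX| * (((((k:ℝ)+(N:ℝ)+1)^2*π^2))^2*(w k)^2 + 2*((((k:ℝ)+(N:ℝ)+1)^2*π^2))⁻¹) := by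
          ring
  have hSone : Summable (fun k : ℕ => (-((((k:ℝ)+(N:ℝ)+1)^2*π^2)^2)
      + (a+δ)*(((k:ℝ)+(N:ℝ)+1)^2*π^2)) * (w k)^2) :=
    (hsum.neg.add (hlamw.mul_left (a+δ))).congr (fun k => by ring)
  -- the main tail-sum bound
  have hsum_bound :
      2 * (∑' k : ℕ, (-((((k:ℝ)+(N:ℝ)+1)^2*π^2)^2) + (a+δ)*(((k:ℝ)+(N:ℝ)+1)^2*π^2)) * (w k)^2)
        - 2 * (∑' k : ℕ, (((k:ℝ)+(N:ℝ)+1)^2*π^2) * (Real.sqrt 2/(((k:ℝ)+(N:ℝ)+1)*π)) * w k * KX)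
      ≤ -2*G*ζ^2 + (4 * α₁ / (Real.sqrt (N:ℝ) * π ^ ((3:ℝ)/2))) * KX^2 := by
    have hcid : ∀ k : ℕ,
        (((k:ℝ)+(N:ℝ)+1)^2*π^2) * (Real.sqrt 2/(((k:ℝ)+(N:ℝ)+1)*π)) * w k * KX
        = Real.sqrt (2*(((k:ℝ)+(N:ℝ)+1)^2*π^2)) * w k * KX := by
      intro k
      have hm0 : (0:ℝ) < ((k:ℝ)+(N:ℝ)+1)*π := by positivity
      have h1 : Real.sqrt (2*(((k:ℝ)+(N:ℝ)+1)^2*π^2))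
          = Real.sqrt 2 * (((k:ℝ)+(N:ℝ)+1)*π) := by
        rw [show 2*(((k:ℝ)+(N:ℝ)+1)^2*π^2) = 2 * ((((k:ℝ)+(N:ℝ)+1)*π))^2 by ring,
            Real.sqrt_mul (by norm_num), Real.sqrt_sq hm0.le]
      rw [h1]
      field_simp
    rw [tsum_congr hcid, ← tsum_mul_left, ← tsum_mul_left,
        ← Summable.tsum_sub (hSone.mul_left 2) (hcr.mul_left 2)]
    have hgsum : Summable (fun k : ℕ =>
        -2*(s - (a+δ) - e/(2*α₁))*((((k:ℝ)+(N:ℝ)+1)^2*π^2)*(w k)^2)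
          + 2*α₁*(((((k:ℝ)+(N:ℝ)+1)^2*π^2) ^ ((3:ℝ)/4)))⁻¹*KX^2) :=
      ((hlamw.mul_left (-2*(s - (a+δ) - e/(2*α₁)))).add
        (hu_sum.mul_left (2*α₁*KX^2))).congr (fun k => by ring)
    refine le_trans (Summable.tsum_le_tsum (fun k => ?_) ((hSone.mul_left 2).sub (hcr.mul_left 2)) hgsum) ?_
    · have pt := per_term α₁ a δ (((k:ℝ)+(N:ℝ)+1)^2*π^2) s (w k) KX hα₁ hs0 (hlam_ge k) hmono
      rw [← hedef] at pt
      linarith [pt]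
    · have hsplit : ∑' k : ℕ,
          (-2*(s - (a+δ) - e/(2*α₁))*((((k:ℝ)+(N:ℝ)+1)^2*π^2)*(w k)^2)
            + 2*α₁*(((((k:ℝ)+(N:ℝ)+1)^2*π^2) ^ ((3:ℝ)/4)))⁻¹*KX^2)
          = (-2*(s - (a+δ) - e/(2*α₁))) *
              (∑' k : ℕ, (((k:ℝ)+(N:ℝ)+1)^2*π^2)*(w k)^2)
            + (2*α₁*KX^2) * ∑' k : ℕ, (((((k:ℝ)+(N:ℝ)+1)^2*π^2) ^ ((3:ℝ)/4)))⁻¹ := by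
        rw [← tsum_mul_left, ← tsum_mul_left,
          ← Summable.tsum_add (hlamw.mul_left (-2*(s - (a+δ) - e/(2*α₁)))) (hu_sum.mul_left (2*α₁*KX^2))]
        exact tsum_congr (fun k => by ring)
      rw [hsplit]
      have h2a : (-2*(s - (a+δ) - e/(2*α₁))) *
          (∑' k : ℕ, (((k:ℝ)+(N:ℝ)+1)^2*π^2)*(w k)^2) ≤ -2*G*ζ^2 := by
        have hmul := mul_le_mul_of_nonneg_left hζ (le_of_lt (by linarith : (0:ℝ) < 2*G))
        rw [show s - (a+δ) - e/(2*α₁) = G from hGdef.symm]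
        linarith [hmul]
      have h2b : (2*α₁*KX^2) * (∑' k : ℕ, (((((k:ℝ)+(N:ℝ)+1)^2*π^2) ^ ((3:ℝ)/4)))⁻¹)
          ≤ (4 * α₁ / (Real.sqrt (N:ℝ) * π ^ ((3:ℝ)/2))) * KX^2 := by
        have := mul_le_mul_of_nonneg_left hS3 (by positivity : (0:ℝ) ≤ 2*α₁*KX^2)
        calc (2*α₁*KX^2) * (∑' k : ℕ, (((((k:ℝ)+(N:ℝ)+1)^2*π^2) ^ ((3:ℝ)/4)))⁻¹)
            ≤ (2*α₁*KX^2) * (2 / (Real.sqrt (N:ℝ) * π ^ ((3:ℝ)/2))) := this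
          _ = (4 * α₁ / (Real.sqrt (N:ℝ) * π ^ ((3:ℝ)/2))) * KX^2 := by ring
      linarith [h2a, h2b]
  -- the LMI evaluated at the closed-loop state
  set z : ℝ := e * ζ / α₁ with hzdef
  have hQle : (Sum.elim X ![ζ, z]) ⬝ᵥ M.mulVec (Sum.elim X ![ζ, z]) ≤ 0 := by
    have h := hLMI.posSemidef.dotProduct_mulVec_nonneg (Sum.elim X ![ζ, z])
    rw [star_trivial, Matrix.neg_mulVec, dotProduct_neg] at h
    linarith
  have hQX := hQ X ζ z
  have hΦX : X ⬝ᵥ Φ.mulVec X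
      = X ⬝ᵥ (P * F + Fᵀ * P + (2 * δ) • P).mulVec X
        + (4 * α₁ / (Real.sqrt (N:ℝ) * π ^ ((3:ℝ)/2))) * KX^2 := by
    have hvv : (Matrix.vecMulVec K K).mulVec X = (K ⬝ᵥ X) • K := by
      funext i
      simp only [Matrix.mulVec, Matrix.vecMulVec_apply, dotProduct, Pi.smul_apply,
        smul_eq_mul]
      rw [Finset.sum_mul]
      exact Finset.sum_congr rfl fun j _ => by ring
    rw [hΦ, Matrix.add_mulVec, dotProduct_add, Matrix.smul_mulVec,
        dotProduct_smul, hvv, dotProduct_smul, dotProduct_comm X K]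
    simp only [smul_eq_mul, ← hKXdef]
    ring
  have hzero : (-2*(s - a - δ))*ζ^2 + 2*1*ζ*z + (-α₁*e⁻¹)*z^2 + 2*G*ζ^2 = 0 := by
    rw [hzdef, hGdef]
    field_simp
    ring
  linarith [hQle, hQX, hΦX, hsum_bound, hzero]
end

section
/- Let N be a positive integer, a ∈ ℝ, δ > 0, α₁ > 0, λ_n = n²π², b_n = √2/(nπ). Let P ∈ ℝ^{(2N+1)×(2N+1)} be symmetric positive definite, F ∈ ℝ^{(2N+1)×(2N+1)}, 𝓛 ∈ ℝ^{2N+1}, K ∈ ℝ^{1×(2N+1)}, and assume the LMI of the previous statement: [[Φ, P𝓛, 0], [𝓛ᵀP, −2(λ_{N+1} − a − δ), 1], [0, 1, −α₁·λ_{N+1}^{−3/4}]] < 0 with Φ = PF + FᵀP + 2δP + (4α₁/(√N·π^{3/2}))·KᵀK, together with λ_{N+1}^{1/4} ≥ 3/(8α₁). Let X : [0,∞) → ℝ^{2N+1} be continuously differentiable, w_n : [0,∞) → ℝ (n > N) continuously differentiable, and ζ : [0,∞) → ℝ satisfy Ẋ(t) = F·X(t) + 𝓛·ζ(t), ẇ_n(t)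 = (−λ_n + a)·w_n(t) − b_n·K·X(t) for all n > N, and ζ(t)² ≤ ∑_{n=N+1}^∞ λ_n·w_n(t)² for all t ≥ 0. Assume moreover that ∑_{n=N+1}^∞ λ_n²·w_n(t)² is finite and locally bounded in t, and that V(t) = X(t)ᵀP·X(t) + ∑_{n=N+1}^∞ λ_n·w_n(t)² is differentiable with V̇(t) = 2X(t)ᵀP·Ẋ(t) + ∑_{n=N+1}^∞ 2λ_n·w_n(t)·ẇ_n(t) (term-by-term differentiation of the tail series is valid). Then V(t) ≤ e^{−2δt}·V(0) for all t ≥ 0. -/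
open Real Matrix

lemma aux_mono (q q1 α₁ : ℝ) (hq1 : 0 < q1) (hq : q1 ≤ q) (hα : 0 < α₁)
    (hm : 3 ≤ 8 * α₁ * q1) : q^3/α₁ - 2*q^4 ≤ q1^3/α₁ - 2*q1^4 := by
  rw [div_sub' (ne_of_gt hα), div_sub' (ne_of_gt hα), div_le_div_iff₀ hα hα]
  have hq0 : 0 < q := lt_of_lt_of_le hq1 hq
  have h1 : 0 ≤ (q - q1)^2 * (3*q^2 + 2*q*q1 + q1^2) :=
    mul_nonneg (sq_nonneg _) (by positivity)
  have h2 : 0 ≤ (8*α₁*q1 - 3) * (q^4 - q1^4) := by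
    apply mul_nonneg (by linarith)
    have : q1^4 ≤ q^4 := pow_le_pow_left₀ hq1.le hq 4
    linarith
  nlinarith [mul_nonneg h1 hq1.le]

lemma aux_permode (a δ α₁ q q1 w u : ℝ) (hq1 : 0 < q1) (hq : q1 ≤ q) (hα : 0 < α₁)
    (hm : 3 ≤ 8 * α₁ * q1) :
    2*q^4*w*((-q^4 + a)*w - (Real.sqrt 2 / q^2) * u) + 2*δ*(q^4*w^2)
      ≤ (-2*(q1^4 - a - δ) + q1^3/α₁) * (q^4*w^2) + (2*α₁*u^2) * (q^3)⁻¹ := by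
  have hq0 : 0 < q := lt_of_lt_of_le hq1 hq
  have hr : (Real.sqrt 2)^2 = 2 := Real.sq_sqrt (by norm_num)
  set r := Real.sqrt 2 with hrdef
  have hG := aux_mono q q1 α₁ hq1 hq hα hm
  have hS : 0 ≤ q^7*w^2/α₁ + 2*α₁*u^2/q^3 + 2*q^2*r*w*u := by
    have hpos : 0 < α₁ * q^3 := by positivity
    have hid : α₁*q^3*(q^7*w^2/α₁ + 2*α₁*u^2/q^3 + 2*q^2*r*w*u) = (q^5*w + r*α₁*u)^2 := by
      field_simp
      linear_combination (-α₁^2*u^2) * hr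
    nlinarith [sq_nonneg (q^5*w + r*α₁*u)]
  have key : ((-2*(q1^4 - a - δ) + q1^3/α₁) * (q^4*w^2) + (2*α₁*u^2) * (q^3)⁻¹)
      - (2*q^4*w*((-q^4 + a)*w - (r / q^2) * u) + 2*δ*(q^4*w^2))
      = ((q1^3/α₁ - 2*q1^4) - (q^3/α₁ - 2*q^4))*(q^4*w^2)
        + (q^7*w^2/α₁ + 2*α₁*u^2/q^3 + 2*q^2*r*w*u) := by
    field_simp
    ring
  nlinarith [mul_nonneg (sub_nonneg.2 hG) (by positivity : (0:ℝ) ≤ q^4*w^2)]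

lemma aux_step (x : ℝ) (hx : 1 ≤ x) :
    ((x+1) * Real.sqrt (x+1))⁻¹ ≤ 2 / Real.sqrt x - 2 / Real.sqrt (x+1) := by
  have hx0 : 0 < x := by linarith
  set p := Real.sqrt x with hp
  set s := Real.sqrt (x+1) with hs
  have hp2 : p^2 = x := Real.sq_sqrt hx0.le
  have hs2 : s^2 = x+1 := Real.sq_sqrt (by linarith)
  have hp0 : 0 < p := Real.sqrt_pos.2 hx0
  have hs0 : 0 < s := Real.sqrt_pos.2 (by linarith)
  have hps : p ≤ s := Real.sqrt_le_sqrt (by linarith)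
  have h1 : (x+1) * s = s^3 := by rw [← hs2]; ring
  rw [h1, div_sub_div _ _ (ne_of_gt hp0) (ne_of_gt hs0), inv_eq_one_div,
    div_le_div_iff₀ (by positivity) (by positivity)]
  nlinarith [mul_nonneg (mul_nonneg hs0.le (sub_nonneg.2 hps)) (by positivity : (0:ℝ) ≤ 2*s+p),
    mul_pos hs0 hp0, sq_nonneg (s-p), sq_nonneg (s+p)]

lemma aux_tele (N : ℕ) (hN : 0 < N) :
    Summable (fun k : ℕ => (((k:ℝ)+N+1) * Real.sqrt ((k:ℝ)+N+1))⁻¹) ∧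
    ∑' k : ℕ, (((k:ℝ)+N+1) * Real.sqrt ((k:ℝ)+N+1))⁻¹ ≤ 2 / Real.sqrt N := by
  have hN1 : (1:ℝ) ≤ N := by exact_mod_cast hN
  have hnn : ∀ k : ℕ, 0 ≤ (((k:ℝ)+N+1) * Real.sqrt ((k:ℝ)+N+1))⁻¹ := by
    intro k; positivity
  have hpart : ∀ n : ℕ, ∑ k ∈ Finset.range n, (((k:ℝ)+N+1) * Real.sqrt ((k:ℝ)+N+1))⁻¹
      ≤ 2 / Real.sqrt N - 2 / Real.sqrt ((n:ℝ)+N) := by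
    intro n
    induction n with
    | zero => simp
    | succ n ih =>
      rw [Finset.sum_range_succ]
      have hstep := aux_step ((n:ℝ)+N) (by linarith)
      push_cast
      have e1 : (n:ℝ) + 1 + (N:ℝ) = ((n:ℝ)+(N:ℝ)) + 1 := by ring
      rw [e1]
      linarith
  have hbound : ∀ n : ℕ, ∑ k ∈ Finset.range n, (((k:ℝ)+N+1) * Real.sqrt ((k:ℝ)+N+1))⁻¹
      ≤ 2 / Real.sqrt N := by
    intro n
    have h2 : 0 ≤ 2 / Real.sqrt ((n:ℝ)+N) := by positivity
    linarith [hpart n]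
  exact ⟨summable_of_sum_range_le hnn hbound, tsum_le_of_sum_range_le hnn hbound⟩

lemma aux_gronwall (δ : ℝ) (V D : ℝ → ℝ)
    (hd : ∀ t, 0 ≤ t → HasDerivAt V (D t) t)
    (hb : ∀ t, 0 ≤ t → D t + 2*δ*V t ≤ 0) :
    ∀ t, 0 ≤ t → V t ≤ Real.exp (-2*δ*t) * V 0 := by
  set g : ℝ → ℝ := fun t => Real.exp (2*δ*t) * V t with hg
  have hgd : ∀ t, 0 ≤ t → HasDerivAt g (Real.exp (2*δ*t) * (D t + 2*δ*V t)) t := by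
    intro t ht
    have h1 : HasDerivAt (fun t : ℝ => Real.exp (2*δ*t)) (Real.exp (2*δ*t) * (2*δ)) t := by
      have h0 : HasDerivAt (fun t : ℝ => 2*δ*t) (2*δ) t := by
        simpa using (hasDerivAt_id t).const_mul (2*δ)
      exact h0.exp
    have := h1.mul (hd t ht)
    have e : Real.exp (2*δ*t) * (D t + 2*δ*V t)
        = Real.exp (2*δ*t) * (2*δ) * V t + Real.exp (2*δ*t) * D t := by ring
    rw [e]; exact this
  have anti : AntitoneOn g (Set.Ici (0:ℝ)) := by
    apply antitoneOn_of_deriv_nonpos (convex_Ici 0)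
    · intro t ht
      exact ((hgd t ht).continuousAt).continuousWithinAt
    · intro t ht
      rw [interior_Ici] at ht
      exact ((hgd t (le_of_lt ht)).differentiableAt).differentiableWithinAt
    · intro t ht
      rw [interior_Ici] at ht
      rw [(hgd t ht.le).deriv]
      exact mul_nonpos_of_nonneg_of_nonpos (Real.exp_nonneg _) (hb t ht.le)
  intro t ht
  have h2 : g t ≤ g 0 := anti Set.self_mem_Ici ht ht
  have h3 : g 0 = V 0 := by simp [hg]
  have h4 : Real.exp (2*δ*t) * V t ≤ V 0 := by rw [← h3]; exact h2
  have h5 : 0 < Real.exp (2*δ*t) := Real.exp_pos _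
  have h6 : Real.exp (-2*δ*t) = (Real.exp (2*δ*t))⁻¹ := by
    rw [show -2*δ*t = -(2*δ*t) by ring, Real.exp_neg]
  rw [h6, inv_mul_eq_div, le_div_iff₀ h5, mul_comm]
  exact h4

lemma aux_quad (d : ℕ) (Φ : Matrix (Fin d) (Fin d) ℝ) (PL : Fin d → ℝ) (d22 e22 : ℝ)
    (x : Fin d → ℝ) (s r : ℝ) :
    Sum.elim x ![s, r] ⬝ᵥ (Matrix.fromBlocks Φ
      (Matrix.of fun i (j : Fin 2) => if j = 0 then PL i else 0)
      (Matrix.of fun (i : Fin 2) j => if i = 0 then PL j else 0)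
      !![d22, 1; 1, e22]) *ᵥ Sum.elim x ![s, r]
      = x ⬝ᵥ Φ *ᵥ x + 2*s*(PL ⬝ᵥ x) + d22*s^2 + 2*s*r + e22*r^2 := by
  have hB : (Matrix.of fun i (j : Fin 2) => if j = 0 then PL i else 0) *ᵥ ![s, r]
      = s • PL := by
    funext i
    simp [Matrix.mulVec, dotProduct, Fin.sum_univ_two, mul_comm]
  have hC : (Matrix.of fun (i : Fin 2) j => if i = 0 then PL j else 0) *ᵥ x
      = ![PL ⬝ᵥ x, 0] := by
    funext i
    fin_cases i <;> simp [Matrix.mulVec, dotProduct]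
  have hD : !![d22, 1; 1, e22] *ᵥ ![s, r] = ![d22*s + r, s + e22*r] := by
    funext i
    fin_cases i <;> simp [Matrix.mulVec, dotProduct, Fin.sum_univ_two]
  rw [Matrix.fromBlocks_mulVec]
  simp only [Sum.elim_comp_inl, Sum.elim_comp_inr]
  rw [hB, hC, hD, sumElim_dotProduct_sumElim,
    dotProduct_add, dotProduct_add, dotProduct_smul]
  simp [dotProduct, Fin.sum_univ_two]
  have hc : ∑ i : Fin d, x i * PL i = ∑ i : Fin d, PL i * x i := by
    apply Finset.sum_congr rfl; intro i _; ring
  rw [hc]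
  ring

lemma aux_rpow1 (y : ℝ) (hy : 0 < y) : ((y^4 : ℝ)) ^ ((1:ℝ)/4) = y := by
  rw [← Real.rpow_natCast y 4, ← Real.rpow_mul hy.le]
  norm_num

lemma aux_rpow2 (y : ℝ) (hy : 0 < y) : ((y^4 : ℝ)) ^ (-(3/4 : ℝ)) = (y^3)⁻¹ := by
  rw [← Real.rpow_natCast y 4, ← Real.rpow_mul hy.le]
  norm_num

lemma aux_ge1 (m p : ℝ) (hm : 1 ≤ m) (hp : 1 ≤ p) : 1 ≤ m^2*p^2 := by
  have hmp : 1 ≤ m*p := by nlinarith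
  nlinarith [hmp, sq_nonneg (m*p - 1)]

lemma aux_le1 (lam ww : ℝ) (h : 1 ≤ lam) : lam*ww^2 ≤ lam^2*ww^2 := by
  nlinarith [mul_nonneg (mul_nonneg (by linarith : (0:ℝ) ≤ lam) (by linarith : (0:ℝ) ≤ lam - 1)) (sq_nonneg ww)]

lemma aux_mwbound (m p ww : ℝ) (hm1 : 1 ≤ m) (hp : 3 < p) :
    |m * ww| ≤ 1/(2*p^4)*((m^2*p^2)^2*ww^2) + 1/2*(m * Real.sqrt m)⁻¹ := by
  have hm0 : (0:ℝ) < m := by linarith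
  have hs0 : 0 < Real.sqrt m := Real.sqrt_pos.2 hm0
  have hs2 : Real.sqrt m ^ 2 = m := Real.sq_sqrt hm0.le
  have hsle : Real.sqrt m ≤ m := by nlinarith
  have h1 : (m^2)⁻¹ ≤ (m * Real.sqrt m)⁻¹ := by
    apply inv_anti₀ (by positivity)
    nlinarith
  set y := m⁻¹ with hy
  have hmy : m * y = 1 := mul_inv_cancel₀ (ne_of_gt hm0)
  have hyy : y^2 = (m^2)⁻¹ := by rw [hy, ← inv_pow]
  have key : 0 ≤ (m^2*|ww| - y)^2 := sq_nonneg _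
  have h4 : m^2*y = m := by
    rw [hy, pow_two, mul_assoc, mul_inv_cancel₀ (ne_of_gt hm0), mul_one]
  have h5 : m^2*y*ww = m*ww := by rw [h4]
  have h3 : 1/(2*p^4)*((m^2*p^2)^2*ww^2) = m^4*ww^2/2 := by
    have hp0 : p ≠ 0 := ne_of_gt (by linarith : (0:ℝ) < p)
    field_simp
  rw [h3, abs_le]
  constructor
  · nlinarith [sq_nonneg (m^2*ww + y), h5, hyy, h1]
  · nlinarith [sq_nonneg (m^2*ww - y), h5, hyy, h1]

lemma aux_Aexpand (m p aa ww u : ℝ) (hm : 0 < m) (hp : 0 < p) :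
    2 * (m^2*p^2) * ww * ((-(m^2*p^2) + aa)*ww - (Real.sqrt 2/(m*p))*u)
    = ((-2)*((m^2*p^2)^2*ww^2) + (2*aa)*(m^2*p^2*(ww)^2))
        + (((-2)*Real.sqrt 2*p*u)*(m*ww)) := by
  have hm0 : m ≠ 0 := ne_of_gt hm
  have hp0 : p ≠ 0 := ne_of_gt hp
  field_simp
  ring

/-- Lyapunov decay under the LMI (23): with `λ_n = n²π²`, `b_n = √2/(nπ)` (here index
`k` stands for `n = N+1+k`), assume the block LMI of the previous statement and
`λ_{N+1}^{1/4} ≥ 3/(8α₁)`. If `X`, `(w_n)_{n>N}` are continuously differentiable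
solutions of the closed-loop system `Ẋ = FX + 𝓛ζ`, `ẇ_n = (−λ_n+a)w_n − b_n KX`, with
`ζ(t)² ≤ ∑ λ_n w_n(t)²`, the tail `∑ λ_n² w_n(t)²` finite and locally bounded, and the
Lyapunov function `V(t) = X(t)ᵀPX(t) + ∑ λ_n w_n(t)²` differentiable term-by-term, then
`V(t) ≤ e^{−2δt} V(0)` for all `t ≥ 0`. -/
theorem stmt_13 (N : ℕ) (hN : 0 < N) (a δ α₁ : ℝ) (hδ : 0 < δ) (hα₁ : 0 < α₁)
    (P F : Matrix (Fin (2 * N + 1)) (Fin (2 * N + 1)) ℝ) (hP : P.PosDef)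
    (L K : Fin (2 * N + 1) → ℝ)
    (Φ : Matrix (Fin (2 * N + 1)) (Fin (2 * N + 1)) ℝ)
    (hΦ : Φ = P * F + Fᵀ * P + (2 * δ) • P
      + (4 * α₁ / (Real.sqrt (N : ℝ) * π ^ ((3 : ℝ) / 2))) • Matrix.vecMulVec K K)
    (M : Matrix (Fin (2 * N + 1) ⊕ Fin 2) (Fin (2 * N + 1) ⊕ Fin 2) ℝ)
    (hM : M = Matrix.fromBlocks Φ
      (Matrix.of fun i (j : Fin 2) => if j = 0 then P.mulVec L i else 0)
      (Matrix.of fun (i : Fin 2) j => if i = 0 then P.mulVec L j else 0)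
      !![-2 * (((N : ℝ) + 1) ^ 2 * π ^ 2 - a - δ), 1;
         1, -α₁ * ((((N : ℝ) + 1) ^ 2 * π ^ 2) ^ (-(3 / 4 : ℝ)))])
    (hLMI : (-M).PosDef)
    (hmono : ((((N : ℝ) + 1) ^ 2 * π ^ 2) ^ ((1 : ℝ) / 4)) ≥ 3 / (8 * α₁))
    (X : ℝ → Fin (2 * N + 1) → ℝ) (w : ℕ → ℝ → ℝ) (ζ : ℝ → ℝ) (V : ℝ → ℝ)
    (hζc : Continuous ζ)
    (hX : ∀ t : ℝ, 0 ≤ t → HasDerivAt X (F.mulVec (X t) + ζ t • L) t)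
    (hw : ∀ (k : ℕ) (t : ℝ), 0 ≤ t → HasDerivAt (w k)
      ((-(((k : ℝ) + (N : ℝ) + 1) ^ 2 * π ^ 2) + a) * w k t
        - (Real.sqrt 2 / (((k : ℝ) + (N : ℝ) + 1) * π)) * (K ⬝ᵥ X t)) t)
    (hζ : ∀ t : ℝ, 0 ≤ t →
      (ζ t) ^ 2 ≤ ∑' k : ℕ, (((k : ℝ) + (N : ℝ) + 1) ^ 2 * π ^ 2) * (w k t) ^ 2)
    (hsum : ∀ t : ℝ, Summable
      (fun k : ℕ => ((((k : ℝ) + (N : ℝ) + 1) ^ 2 * π ^ 2) ^ 2) * (w k t) ^ 2))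
    (hloc : ∀ T : ℝ, 0 ≤ T → ∃ C : ℝ, ∀ t ∈ Set.Icc (0 : ℝ) T,
      (∑' k : ℕ, ((((k : ℝ) + (N : ℝ) + 1) ^ 2 * π ^ 2) ^ 2) * (w k t) ^ 2) ≤ C)
    (hV : ∀ t : ℝ, V t = X t ⬝ᵥ P.mulVec (X t)
      + ∑' k : ℕ, (((k : ℝ) + (N : ℝ) + 1) ^ 2 * π ^ 2) * (w k t) ^ 2)
    (hV' : ∀ t : ℝ, 0 ≤ t → HasDerivAt V
      (2 * (X t ⬝ᵥ P.mulVec (F.mulVec (X t) + ζ t • L))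
        + ∑' k : ℕ, 2 * (((k : ℝ) + (N : ℝ) + 1) ^ 2 * π ^ 2) * w k t *
          ((-(((k : ℝ) + (N : ℝ) + 1) ^ 2 * π ^ 2) + a) * w k t
            - (Real.sqrt 2 / (((k : ℝ) + (N : ℝ) + 1) * π)) * (K ⬝ᵥ X t))) t) :
    ∀ t : ℝ, 0 ≤ t → V t ≤ Real.exp (-2 * δ * t) * V 0 := by
  have hπ : (0:ℝ) < π := Real.pi_pos
  have hπ3 : (3:ℝ) < π := Real.pi_gt_three
  have hNpos : (0:ℝ) < (N:ℝ) := by exact_mod_cast hN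
  have hN1 : (1:ℝ) ≤ (N:ℝ) := by exact_mod_cast hN
  set q1 : ℝ := Real.sqrt (((N:ℝ)+1) * π) with hq1def
  have hq1pos : 0 < q1 := Real.sqrt_pos.2 (by positivity)
  have hq1sq : q1^2 = ((N:ℝ)+1) * π := Real.sq_sqrt (by positivity)
  have hq1four : q1^4 = ((N:ℝ)+1)^2 * π^2 := by
    have h0 : q1^4 = (q1^2)^2 := by ring
    rw [h0, hq1sq]; ring
  have hα₁ne : α₁ ≠ 0 := ne_of_gt hα₁
  have hq1ne : q1 ≠ 0 := ne_of_gt hq1pos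
  have h3 : 3 ≤ 8 * α₁ * q1 := by
    have h1 : ((((N:ℝ)+1)^2 * π^2) ^ ((1:ℝ)/4)) = q1 := by
      rw [← hq1four]; exact aux_rpow1 q1 hq1pos
    rw [h1, ge_iff_le, div_le_iff₀ (by positivity)] at hmono
    nlinarith [hmono]
  set c : ℝ := -2*(((N:ℝ)+1)^2*π^2 - a - δ) + q1^3/α₁ with hcdef
  have hMle : ∀ v : (Fin (2*N+1) ⊕ Fin 2) → ℝ, v ⬝ᵥ M *ᵥ v ≤ 0 := by
    intro v
    by_cases hv : v = 0
    · subst hv; simp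
    · have h := Matrix.PosDef.dotProduct_mulVec_pos hLMI hv
      simp only [star_trivial] at h
      rw [Matrix.neg_mulVec, dotProduct_neg] at h
      linarith
  have hQP : ∀ (x : Fin (2*N+1) → ℝ) (s : ℝ),
      x ⬝ᵥ Φ *ᵥ x + 2*s*((P *ᵥ L) ⬝ᵥ x) + c*s^2 ≤ 0 := by
    intro x s
    have he22 : -α₁ * ((((N:ℝ)+1)^2*π^2) ^ (-(3/4 : ℝ))) = -α₁ * (q1^3)⁻¹ := by
      rw [← hq1four, aux_rpow2 q1 hq1pos]
    have hv := hMle (Sum.elim x ![s, s * q1^3 / α₁])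
    rw [hM] at hv
    rw [show !![-2 * (((N:ℝ) + 1) ^ 2 * π ^ 2 - a - δ), 1;
         1, -α₁ * ((((N:ℝ) + 1) ^ 2 * π ^ 2) ^ (-(3 / 4 : ℝ)))]
       = !![-2 * (((N:ℝ) + 1) ^ 2 * π ^ 2 - a - δ), 1; 1, -α₁ * (q1^3)⁻¹] by rw [he22]] at hv
    rw [aux_quad (2*N+1) Φ (P *ᵥ L) (-2 * (((N:ℝ) + 1) ^ 2 * π ^ 2 - a - δ))
      (-α₁ * (q1^3)⁻¹) x s (s * q1^3 / α₁)] at hv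
    have hfin : (-2 * (((N:ℝ) + 1) ^ 2 * π ^ 2 - a - δ))*s^2 + 2*s*(s * q1^3 / α₁)
        + (-α₁ * (q1^3)⁻¹)*(s * q1^3 / α₁)^2 = c*s^2 := by
      rw [hcdef]; field_simp; ring
    rw [← hfin]
    linarith only [hv]
  have hc0 : c ≤ 0 := by simpa using hQP 0 1
  have hPsym : Pᵀ = P := by
    have h : Pᴴ = P := hP.1
    rwa [Matrix.conjTranspose_eq_transpose_of_trivial] at h
  have hdotsym : ∀ (y z : Fin (2*N+1) → ℝ), y ⬝ᵥ P *ᵥ z = (P *ᵥ y) ⬝ᵥ z := by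
    intro y z
    rw [Matrix.dotProduct_mulVec]
    nth_rewrite 1 [← hPsym]
    rw [Matrix.vecMul_transpose]
  have hKK : ∀ x : Fin (2*N+1) → ℝ, x ⬝ᵥ (Matrix.vecMulVec K K) *ᵥ x = (K ⬝ᵥ x)^2 := by
    intro x
    simp [Matrix.vecMulVec, Matrix.mulVec, dotProduct, Finset.mul_sum, Finset.sum_mul, sq]
    rw [Finset.sum_comm]
    apply Finset.sum_congr rfl; intro i _
    apply Finset.sum_congr rfl; intro j _
    ring
  have hPhi : ∀ x : Fin (2*N+1) → ℝ,
      x ⬝ᵥ Φ *ᵥ x = 2*(x ⬝ᵥ P *ᵥ (F *ᵥ x)) + 2*δ*(x ⬝ᵥ P *ᵥ x)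
        + (4*α₁/(Real.sqrt (N:ℝ) * π^((3:ℝ)/2))) * (K ⬝ᵥ x)^2 := by
    intro x
    rw [hΦ]
    rw [Matrix.add_mulVec, Matrix.add_mulVec, Matrix.add_mulVec,
      dotProduct_add, dotProduct_add, dotProduct_add,
      Matrix.smul_mulVec, dotProduct_smul, Matrix.smul_mulVec, dotProduct_smul,
      ← Matrix.mulVec_mulVec, ← Matrix.mulVec_mulVec, hKK]
    have h2 : x ⬝ᵥ Fᵀ *ᵥ (P *ᵥ x) = x ⬝ᵥ P *ᵥ (F *ᵥ x) := by
      rw [Matrix.dotProduct_mulVec, Matrix.vecMul_transpose, hdotsym (F *ᵥ x) x]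
      exact dotProduct_comm _ _
    rw [h2]
    simp only [smul_eq_mul]
    ring
  apply aux_gronwall δ V
    (fun r => 2 * (X r ⬝ᵥ P.mulVec (F.mulVec (X r) + ζ r • L))
        + ∑' k : ℕ, 2 * (((k : ℝ) + (N : ℝ) + 1) ^ 2 * π ^ 2) * w k r *
          ((-(((k : ℝ) + (N : ℝ) + 1) ^ 2 * π ^ 2) + a) * w k r
            - (Real.sqrt 2 / (((k : ℝ) + (N : ℝ) + 1) * π)) * (K ⬝ᵥ X r))) hV'
  intro t ht
  show 2 * (X t ⬝ᵥ P.mulVec (F.mulVec (X t) + ζ t • L))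
        + (∑' k : ℕ, 2 * (((k : ℝ) + (N : ℝ) + 1) ^ 2 * π ^ 2) * w k t *
          ((-(((k : ℝ) + (N : ℝ) + 1) ^ 2 * π ^ 2) + a) * w k t
            - (Real.sqrt 2 / (((k : ℝ) + (N : ℝ) + 1) * π)) * (K ⬝ᵥ X t)))
        + 2*δ*V t ≤ 0
  rw [hV t]
  set x := X t with hxdef
  set s := ζ t with hsdef
  set A : ℕ → ℝ := fun k : ℕ => 2 * (((k : ℝ) + (N : ℝ) + 1) ^ 2 * π ^ 2) * w k t *
          ((-(((k : ℝ) + (N : ℝ) + 1) ^ 2 * π ^ 2) + a) * w k t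
            - (Real.sqrt 2 / (((k : ℝ) + (N : ℝ) + 1) * π)) * (K ⬝ᵥ x)) with hAdef
  set G1 : ℕ → ℝ := fun k : ℕ => (((k : ℝ) + (N : ℝ) + 1) ^ 2 * π ^ 2) * (w k t) ^ 2 with hG1def
  set G2 : ℕ → ℝ := fun k : ℕ =>
    (((k:ℝ)+(N:ℝ)+1) * Real.sqrt ((k:ℝ)+(N:ℝ)+1))⁻¹ with hG2def
  set coef : ℝ := (2*α₁*(K ⬝ᵥ x)^2) * (π * Real.sqrt π)⁻¹ with hcoefdef
  -- per mode facts
  have hm1 : ∀ k : ℕ, ((N:ℝ)+1) ≤ (k:ℝ)+(N:ℝ)+1 := by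
    intro k
    have : (0:ℝ) ≤ (k:ℝ) := Nat.cast_nonneg k
    linarith
  have hmpos : ∀ k : ℕ, (0:ℝ) < (k:ℝ)+(N:ℝ)+1 := by
    intro k; have := hm1 k; linarith
  have hqkpos : ∀ k : ℕ, 0 < Real.sqrt (((k:ℝ)+(N:ℝ)+1) * π) := by
    intro k; exact Real.sqrt_pos.2 (mul_pos (hmpos k) hπ)
  have hqksq : ∀ k : ℕ, (Real.sqrt (((k:ℝ)+(N:ℝ)+1) * π))^2 = ((k:ℝ)+(N:ℝ)+1) * π := by
    intro k; exact Real.sq_sqrt (mul_pos (hmpos k) hπ).le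
  have hqk4 : ∀ k : ℕ, (Real.sqrt (((k:ℝ)+(N:ℝ)+1) * π))^4 = ((k:ℝ)+(N:ℝ)+1)^2 * π^2 := by
    intro k
    have h0 : (Real.sqrt (((k:ℝ)+(N:ℝ)+1) * π))^4 = ((Real.sqrt (((k:ℝ)+(N:ℝ)+1) * π))^2)^2 := by
      ring
    rw [h0, hqksq k]; ring
  have hq1qk : ∀ k : ℕ, q1 ≤ Real.sqrt (((k:ℝ)+(N:ℝ)+1) * π) := by
    intro k
    apply Real.sqrt_le_sqrt
    nlinarith [hm1 k, hπ]
  have hqk3 : ∀ k : ℕ, ((Real.sqrt (((k:ℝ)+(N:ℝ)+1) * π))^3)⁻¹ = G2 k * (π * Real.sqrt π)⁻¹ := by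
    intro k
    have hm0 : (0:ℝ) ≤ (k:ℝ)+(N:ℝ)+1 := (hmpos k).le
    have h1 : Real.sqrt (((k:ℝ)+(N:ℝ)+1) * π)
        = Real.sqrt ((k:ℝ)+(N:ℝ)+1) * Real.sqrt π := Real.sqrt_mul hm0 π
    have ha : Real.sqrt ((k:ℝ)+(N:ℝ)+1) ^ 3
        = ((k:ℝ)+(N:ℝ)+1) * Real.sqrt ((k:ℝ)+(N:ℝ)+1) := by
      rw [pow_succ, Real.sq_sqrt hm0]
    have hb : Real.sqrt π ^ 3 = π * Real.sqrt π := by rw [pow_succ, Real.sq_sqrt hπ.le]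
    rw [h1, mul_pow, ha, hb, mul_inv]
  have hpm : ∀ k : ℕ, A k + 2*δ*G1 k ≤ c*G1 k + coef * G2 k := by
    intro k
    have h := aux_permode a δ α₁ (Real.sqrt (((k:ℝ)+(N:ℝ)+1) * π)) q1 (w k t) (K ⬝ᵥ x)
      hq1pos (hq1qk k) hα₁ h3
    rw [hqk4 k, hq1four, hqksq k, hqk3 k] at h
    have heq : (2*α₁*(K ⬝ᵥ x)^2) * (G2 k * (π*Real.sqrt π)⁻¹) = coef * G2 k := by
      rw [hcoefdef]; ring
    rw [heq] at h
    rw [← hcdef] at h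
    simp only [hAdef, hG1def]
    exact h
  -- summability
  have hG1nn : ∀ k, 0 ≤ G1 k := by
    intro k; simp only [hG1def]; positivity
  have hlamge1 : ∀ k : ℕ, 1 ≤ ((k:ℝ)+(N:ℝ)+1)^2*π^2 := by
    intro k
    exact aux_ge1 _ _ (by linarith only [hm1 k, hN1]) (by linarith only [hπ3])
  have hSG1 : Summable G1 := by
    apply Summable.of_nonneg_of_le hG1nn _ (hsum t)
    intro k
    simp only [hG1def]
    exact aux_le1 _ _ (hlamge1 k)
  have hSG2 : Summable G2 := (aux_tele N hN).1
  have hSmw : Summable (fun k : ℕ => ((k:ℝ)+(N:ℝ)+1) * w k t) := by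
    apply Summable.of_abs
    apply Summable.of_nonneg_of_le (fun k => abs_nonneg _) _
      (((hsum t).mul_left (1/(2*π^4))).add (hSG2.mul_left (1/2)))
    intro k
    simp only [hG2def]
    exact aux_mwbound _ _ _ (by linarith only [hm1 k, hN1]) hπ3
  have hA_eq : A = fun k : ℕ => (((-2)*(((((k:ℝ)+(N:ℝ)+1)^2*π^2)^2)*(w k t)^2)
        + (2*a)*G1 k)
      + (((-2)*Real.sqrt 2*π*(K ⬝ᵥ x))*(((k:ℝ)+(N:ℝ)+1)*(w k t)))) := by
    funext k
    simp only [hAdef, hG1def]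
    exact aux_Aexpand _ _ _ _ _ (hmpos k) hπ
  have hSA : Summable A := by
    rw [hA_eq]
    exact (((hsum t).mul_left ((-2))).add (hSG1.mul_left (2*a))).add
      (hSmw.mul_left ((-2)*Real.sqrt 2*π*(K ⬝ᵥ x)))
  have hSAB : Summable (fun k => A k + 2*δ*G1 k) := hSA.add (hSG1.mul_left (2*δ))
  have hSrhs : Summable (fun k => c*G1 k + coef*G2 k) :=
    (hSG1.mul_left c).add (hSG2.mul_left coef)
  have hT1 : (∑' k, A k) + 2*δ*(∑' k, G1 k) ≤ c*(∑' k, G1 k) + coef*(∑' k, G2 k) := by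
    have h1 := Summable.tsum_le_tsum hpm hSAB hSrhs
    rw [Summable.tsum_add hSA (hSG1.mul_left (2*δ)), Summable.tsum_add (hSG1.mul_left c) (hSG2.mul_left coef),
      tsum_mul_left, tsum_mul_left, tsum_mul_left] at h1
    exact h1
  have hT5 : c*(∑' k, G1 k) ≤ c*s^2 := by
    apply mul_le_mul_of_nonpos_left _ hc0
    exact hζ t ht
  have hcoefnn : 0 ≤ coef := by
    rw [hcoefdef]; positivity
  have hT4 : coef*(∑' k, G2 k) ≤ coef*(2/Real.sqrt (N:ℝ)) :=
    mul_le_mul_of_nonneg_left (aux_tele N hN).2 hcoefnn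
  have hcoef2 : coef*(2/Real.sqrt (N:ℝ))
      = (4*α₁/(Real.sqrt (N:ℝ)*π^((3:ℝ)/2))) * (K ⬝ᵥ x)^2 := by
    have hpi32 : π^((3:ℝ)/2) = π*Real.sqrt π := by
      rw [show (3:ℝ)/2 = 1 + 1/2 by norm_num, Real.rpow_add hπ, Real.rpow_one,
        ← Real.sqrt_eq_rpow]
    rw [hcoefdef, hpi32]
    have h1 : Real.sqrt (N:ℝ) ≠ 0 := ne_of_gt (Real.sqrt_pos.2 hNpos)
    have h2 : Real.sqrt π ≠ 0 := ne_of_gt (Real.sqrt_pos.2 hπ)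
    have h3' : π ≠ 0 := ne_of_gt hπ
    field_simp
    ring
  have hsplit : x ⬝ᵥ P *ᵥ (F *ᵥ x + s • L) = x ⬝ᵥ P *ᵥ (F *ᵥ x) + s*((P *ᵥ L) ⬝ᵥ x) := by
    rw [Matrix.mulVec_add, dotProduct_add, Matrix.mulVec_smul, dotProduct_smul, smul_eq_mul,
      dotProduct_comm x (P *ᵥ L)]
  calc 2 * (x ⬝ᵥ P *ᵥ (F *ᵥ x + s • L)) + (∑' k, A k) + 2*δ*(x ⬝ᵥ P *ᵥ x + ∑' k, G1 k)
      = (2*(x ⬝ᵥ P *ᵥ (F *ᵥ x)) + 2*s*((P *ᵥ L) ⬝ᵥ x) + 2*δ*(x ⬝ᵥ P *ᵥ x))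
        + ((∑' k, A k) + 2*δ*(∑' k, G1 k)) := by rw [hsplit]; ring
    _ ≤ (2*(x ⬝ᵥ P *ᵥ (F *ᵥ x)) + 2*s*((P *ᵥ L) ⬝ᵥ x) + 2*δ*(x ⬝ᵥ P *ᵥ x))
        + (c*s^2 + (4*α₁/(Real.sqrt (N:ℝ)*π^((3:ℝ)/2))) * (K ⬝ᵥ x)^2) := by
        have h6 : (∑' k, A k) + 2*δ*(∑' k, G1 k)
            ≤ c*s^2 + (4*α₁/(Real.sqrt (N:ℝ)*π^((3:ℝ)/2))) * (K ⬝ᵥ x)^2 := by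
          calc (∑' k, A k) + 2*δ*(∑' k, G1 k)
              ≤ c*(∑' k, G1 k) + coef*(∑' k, G2 k) := hT1
            _ ≤ c*s^2 + coef*(2/Real.sqrt (N:ℝ)) := add_le_add hT5 hT4
            _ = c*s^2 + (4*α₁/(Real.sqrt (N:ℝ)*π^((3:ℝ)/2))) * (K ⬝ᵥ x)^2 := by
                rw [hcoef2]
        exact add_le_add_right h6 _
    _ = x ⬝ᵥ Φ *ᵥ x + 2*s*((P *ᵥ L) ⬝ᵥ x) + c*s^2 := by
        rw [hPhi x]; ring
    _ ≤ 0 := hQP x s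
end

section
/- Let N be a positive integer, α₁, α₂ > 0 and κ₁, κ₂ ∈ ℝ. Let (w_n)_{n>N} be real numbers with ∑_{n=N+1}^∞ (n²π²)^{7/4}·w_n² < ∞. Then, with λ_n = n²π² and b_n = √2/(nπ), 2·∑_{n=N+1}^∞ λ_n·w_n·b_n·(−κ₁ − κ₂) ≤ (1/α₁ + 1/α₂)·∑_{n=N+1}^∞ λ_n^{7/4}·w_n² + (4α₁/(√N·π^{3/2}))·κ₁² + (4α₂/(√N·π^{3/2}))·κ₂². -/
open Real Filter


lemma tele_hasSum (N : ℕ+) :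
    HasSum (fun k : ℕ => 2 * (1 / Real.sqrt ((N:ℝ) + k) - 1 / Real.sqrt ((N:ℝ) + (k+1))))
      (2 / Real.sqrt (N:ℝ)) := by
  have hN : (0:ℝ) < (N:ℝ) := by exact_mod_cast N.pos
  have hmono : ∀ k : ℕ, 1 / Real.sqrt ((N:ℝ) + (k+1)) ≤ 1 / Real.sqrt ((N:ℝ) + k) := by
    intro k
    apply one_div_le_one_div_of_le
    · exact Real.sqrt_pos.2 (by positivity)
    · exact Real.sqrt_le_sqrt (by linarith)
  have hnn : ∀ k : ℕ, 0 ≤ 2 * (1 / Real.sqrt ((N:ℝ) + k) - 1 / Real.sqrt ((N:ℝ) + (k+1))) := by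
    intro k; have := hmono k; linarith
  rw [hasSum_iff_tendsto_nat_of_nonneg hnn]
  have hsum : ∀ n : ℕ, ∑ i ∈ Finset.range n,
      2 * (1 / Real.sqrt ((N:ℝ) + i) - 1 / Real.sqrt ((N:ℝ) + (i+1)))
      = 2 * (1 / Real.sqrt ((N:ℝ)) - 1 / Real.sqrt ((N:ℝ) + n)) := by
    intro n
    rw [← Finset.mul_sum]
    congr 1
    have := Finset.sum_range_sub' (fun i : ℕ => 1 / Real.sqrt ((N:ℝ) + i)) n
    simpa using this
  simp only [hsum]
  have htend : Tendsto (fun n : ℕ => 1 / Real.sqrt ((N:ℝ) + n)) atTop (nhds 0) := by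
    have h1 : Tendsto (fun n : ℕ => ((N:ℝ) + n)) atTop atTop :=
      tendsto_atTop_add_const_left _ _ tendsto_natCast_atTop_atTop
    have h2 := (tendsto_rpow_neg_atTop (y := (1:ℝ)/2) (by norm_num)).comp h1
    have heq : ∀ n : ℕ, ((N:ℝ) + n) ^ (-(1/2 : ℝ)) = 1 / Real.sqrt ((N:ℝ) + n) := by
      intro n
      rw [Real.rpow_neg (by positivity), Real.sqrt_eq_rpow]
      norm_num
    refine h2.congr fun n => ?_
    show ((N:ℝ) + n) ^ (-(1/2 : ℝ)) = 1 / Real.sqrt ((N:ℝ) + n)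
    exact heq n
  have : Tendsto (fun n : ℕ => 2 * (1 / Real.sqrt ((N:ℝ)) - 1 / Real.sqrt ((N:ℝ) + n)))
      atTop (nhds (2 * (1 / Real.sqrt (N:ℝ) - 0))) := (tendsto_const_nhds.sub htend).const_mul 2
  simpa [mul_one_div, div_eq_mul_inv] using this

lemma key_step (x : ℝ) (hx : 1 ≤ x) :
    (x + 1) ^ (-(3:ℝ)/2) ≤ 2 * (1 / Real.sqrt x - 1 / Real.sqrt (x+1)) := by
  have hx0 : (0:ℝ) < x := by linarith
  set s := Real.sqrt x with hs_def
  set t := Real.sqrt (x+1) with ht_def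
  have hs : 0 < s := Real.sqrt_pos.2 hx0
  have ht : 0 < t := Real.sqrt_pos.2 (by linarith)
  have hs2 : s^2 = x := Real.sq_sqrt hx0.le
  have ht2 : t^2 = x + 1 := Real.sq_sqrt (by linarith)
  have hst : s ≤ t := Real.sqrt_le_sqrt (by linarith)
  have h32 : (x+1) ^ ((3:ℝ)/2) = t^2 * t := by
    rw [show ((3:ℝ)/2) = (1:ℝ) + 1/2 by norm_num, Real.rpow_add (by linarith),
      Real.rpow_one, ← Real.sqrt_eq_rpow, ← ht_def, ← ht2]
  have hpow : (x + 1) ^ (-(3:ℝ)/2) = 1 / (t^2 * t) := by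
    rw [show (-(3:ℝ)/2) = -((3:ℝ)/2) by ring, Real.rpow_neg (by linarith), h32, one_div]
  rw [hpow, div_sub_div _ _ hs.ne' ht.ne', mul_one, ← mul_div_assoc,
    div_le_div_iff₀ (by positivity) (by positivity)]
  nlinarith [mul_pos hs ht, sq_nonneg (t - s), mul_nonneg (sub_nonneg.2 hst) (mul_pos (mul_pos ht ht) ht).le,
    mul_le_mul_of_nonneg_right (mul_le_mul hst hst hs.le ht.le) ht.le]

lemma tail_bound (N : ℕ+) :
    Summable (fun k : ℕ => ((k:ℝ) + (N:ℝ) + 1) ^ (-(3:ℝ)/2)) ∧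
    ∑' k : ℕ, ((k:ℝ) + (N:ℝ) + 1) ^ (-(3:ℝ)/2) ≤ 2 / Real.sqrt (N:ℝ) := by
  have hN : (1:ℝ) ≤ (N:ℝ) := by exact_mod_cast N.one_le
  have htel := tele_hasSum N
  have hle : ∀ k : ℕ, ((k:ℝ) + (N:ℝ) + 1) ^ (-(3:ℝ)/2)
      ≤ 2 * (1 / Real.sqrt ((N:ℝ) + k) - 1 / Real.sqrt ((N:ℝ) + (k+1))) := by
    intro k
    have := key_step ((N:ℝ) + k) (by have : (0:ℝ) ≤ (k:ℝ) := k.cast_nonneg; linarith)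
    have e1 : (k:ℝ) + (N:ℝ) + 1 = (N:ℝ) + k + 1 := by ring
    have e2 : ((N:ℝ) + (k+1)) = (N:ℝ) + k + 1 := by ring
    rw [e1, e2]; exact this
  have hnn : ∀ k : ℕ, 0 ≤ ((k:ℝ) + (N:ℝ) + 1) ^ (-(3:ℝ)/2) := by
    intro k; positivity
  have hsummg : Summable (fun k : ℕ => ((k:ℝ) + (N:ℝ) + 1) ^ (-(3:ℝ)/2)) :=
    Summable.of_nonneg_of_le hnn hle htel.summable
  refine ⟨hsummg, ?_⟩
  calc ∑' k : ℕ, ((k:ℝ) + (N:ℝ) + 1) ^ (-(3:ℝ)/2)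
      ≤ ∑' k : ℕ, 2 * (1 / Real.sqrt ((N:ℝ) + k) - 1 / Real.sqrt ((N:ℝ) + (k+1))) :=
        Summable.tsum_le_tsum hle hsummg htel.summable
    _ = 2 / Real.sqrt (N:ℝ) := htel.tsum_eq

lemma young (α a b : ℝ) (hα : 0 < α) : 2 * (a * b) ≤ a^2 / α + α * b^2 := by
  rw [div_add' _ _ _ hα.ne', le_div_iff₀ hα]
  nlinarith [sq_nonneg (a - α * b)]

lemma perterm_s14 (L α u v κ : ℝ) (hL : 0 < L) (hα : 0 < α) (hv2 : v^2 = 2 / L) :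
    2 * (L * u * v * κ) ≤ (1/α) * (L ^ ((7:ℝ)/4) * u^2) + (2 * α * κ^2) * L ^ (-(3:ℝ)/4) := by
  have h78 : (L ^ ((7:ℝ)/8)) * (L ^ ((1:ℝ)/8)) = L := by
    rw [← Real.rpow_add hL]; norm_num
  have ha2 : (L ^ ((7:ℝ)/8))^2 = L ^ ((7:ℝ)/4) := by
    rw [sq, ← Real.rpow_add hL]; norm_num
  have hb2 : (L ^ ((1:ℝ)/8))^2 = L ^ ((1:ℝ)/4) := by
    rw [sq, ← Real.rpow_add hL]; norm_num
  have h14 : L ^ ((1:ℝ)/4) * (2 / L) = 2 * L ^ (-(3:ℝ)/4) := by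
    rw [div_eq_mul_inv (2:ℝ) L, ← Real.rpow_neg_one L,
      show L ^ ((1:ℝ)/4) * (2 * L ^ (-1:ℝ)) = 2 * (L ^ ((1:ℝ)/4) * L ^ (-1:ℝ)) from by ring,
      ← Real.rpow_add hL]
    norm_num
  have hy := young α (L ^ ((7:ℝ)/8) * u) (L ^ ((1:ℝ)/8) * (v * κ)) hα
  have hprod : (L ^ ((7:ℝ)/8) * u) * (L ^ ((1:ℝ)/8) * (v * κ)) = L * u * v * κ := by
    rw [show (L ^ ((7:ℝ)/8) * u) * (L ^ ((1:ℝ)/8) * (v * κ))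
      = (L ^ ((7:ℝ)/8) * L ^ ((1:ℝ)/8)) * (u * v * κ) from by ring, h78]; ring
  have hA : (L ^ ((7:ℝ)/8) * u)^2 = L ^ ((7:ℝ)/4) * u^2 := by rw [mul_pow, ha2]
  have hB : (L ^ ((1:ℝ)/8) * (v * κ))^2 = 2 * L ^ (-(3:ℝ)/4) * κ^2 := by
    rw [mul_pow, hb2, mul_pow, hv2, ← mul_assoc, h14]
  rw [hprod, hA, hB] at hy
  refine hy.trans_eq ?_
  ring


/-- Sampled-data Young bound with fractional eigenvalue powers: for `N ≥ 1`,
`α₁, α₂ > 0`, `κ₁, κ₂ ∈ ℝ` and reals `(w_n)_{n>N}` (here `w k` stands for `w_{N+1+k}`)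
with `∑ λ_n^{7/4} w_n² < ∞`, where `λ_n = n²π²` and `b_n = √2/(nπ)`,
`2∑ λ_n w_n b_n (−κ₁−κ₂) ≤ (1/α₁+1/α₂)∑ λ_n^{7/4} w_n²
  + (4α₁/(√N π^{3/2}))κ₁² + (4α₂/(√N π^{3/2}))κ₂²`. -/
theorem stmt_14 (N : ℕ+) (α₁ α₂ : ℝ) (hα₁ : 0 < α₁) (hα₂ : 0 < α₂) (κ₁ κ₂ : ℝ)
    (w : ℕ → ℝ)
    (hw : Summable fun k : ℕ =>
      ((((k : ℝ) + (N : ℝ) + 1) ^ 2 * π ^ 2) ^ ((7 : ℝ) / 4)) * (w k) ^ 2) :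
    2 * ∑' k : ℕ, (((k : ℝ) + (N : ℝ) + 1) ^ 2 * π ^ 2) * w k *
        (Real.sqrt 2 / (((k : ℝ) + (N : ℝ) + 1) * π)) * (-κ₁ - κ₂)
      ≤ (1 / α₁ + 1 / α₂) * ∑' k : ℕ,
          ((((k : ℝ) + (N : ℝ) + 1) ^ 2 * π ^ 2) ^ ((7 : ℝ) / 4)) * (w k) ^ 2
        + (4 * α₁ / (Real.sqrt (N : ℝ) * π ^ ((3 : ℝ) / 2))) * κ₁ ^ 2
        + (4 * α₂ / (Real.sqrt (N : ℝ) * π ^ ((3 : ℝ) / 2))) * κ₂ ^ 2 := by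
  have hπ := Real.pi_pos
  have hN1 : (1:ℝ) ≤ (N:ℝ) := by exact_mod_cast N.one_le
  have hc1 : ∀ k : ℕ, (0:ℝ) < (k:ℝ) + (N:ℝ) + 1 := fun k => by positivity
  have hL : ∀ k : ℕ, (0:ℝ) < ((k:ℝ) + (N:ℝ) + 1)^2 * π^2 := fun k => by positivity
  have hv2 : ∀ k : ℕ, (Real.sqrt 2 / (((k:ℝ)+(N:ℝ)+1)*π))^2
      = 2 / (((k:ℝ)+(N:ℝ)+1)^2*π^2) := by
    intro k
    rw [div_pow, Real.sq_sqrt (by norm_num : (0:ℝ) ≤ 2), mul_pow]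
  -- pointwise bound
  have hptgen : ∀ (μ₁ μ₂ : ℝ), μ₁^2 = κ₁^2 → μ₂^2 = κ₂^2 → ∀ k : ℕ,
      2 * ((((k:ℝ)+(N:ℝ)+1)^2*π^2) * w k * (Real.sqrt 2/(((k:ℝ)+(N:ℝ)+1)*π)) * (-μ₁-μ₂))
      ≤ (1/α₁+1/α₂) * ((((k:ℝ)+(N:ℝ)+1)^2*π^2)^((7:ℝ)/4) * (w k)^2)
        + (2*α₁*κ₁^2 + 2*α₂*κ₂^2) * ((((k:ℝ)+(N:ℝ)+1)^2*π^2)^(-(3:ℝ)/4)) := by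
    intro μ₁ μ₂ hμ₁ hμ₂ k
    have h1 := perterm_s14 _ α₁ (w k) _ (-μ₁) (hL k) hα₁ (hv2 k)
    have h2 := perterm_s14 _ α₂ (w k) _ (-μ₂) (hL k) hα₂ (hv2 k)
    have hsplit : 2 * ((((k:ℝ)+(N:ℝ)+1)^2*π^2) * w k * (Real.sqrt 2/(((k:ℝ)+(N:ℝ)+1)*π)) * (-μ₁-μ₂))
        = 2 * ((((k:ℝ)+(N:ℝ)+1)^2*π^2) * w k * (Real.sqrt 2/(((k:ℝ)+(N:ℝ)+1)*π)) * (-μ₁))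
        + 2 * ((((k:ℝ)+(N:ℝ)+1)^2*π^2) * w k * (Real.sqrt 2/(((k:ℝ)+(N:ℝ)+1)*π)) * (-μ₂)) := by ring
    refine hsplit.trans_le ((add_le_add h1 h2).trans_eq ?_)
    rw [show (-μ₁)^2 = μ₁^2 from neg_sq μ₁, show (-μ₂)^2 = μ₂^2 from neg_sq μ₂, hμ₁, hμ₂]
    ring
  have hpt := hptgen κ₁ κ₂ rfl rfl
  have hpt' := hptgen (-κ₁) (-κ₂) (neg_sq κ₁) (neg_sq κ₂)
  -- summability of the -3/4 power sequence, and its tsum bound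
  have heq34 : ∀ k : ℕ, (((k:ℝ)+(N:ℝ)+1)^2*π^2)^(-(3:ℝ)/4)
      = ((k:ℝ)+(N:ℝ)+1)^(-(3:ℝ)/2) * π ^ (-(3:ℝ)/2) := by
    intro k
    rw [Real.mul_rpow (sq_nonneg _) (sq_nonneg _)]
    congr 1
    · rw [← Real.rpow_natCast ((k:ℝ)+(N:ℝ)+1) 2, ← Real.rpow_mul (hc1 k).le]
      norm_num
    · rw [← Real.rpow_natCast π 2, ← Real.rpow_mul hπ.le]
      norm_num
  obtain ⟨hS32, hS32le⟩ := tail_bound N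
  have hS2 : Summable (fun k : ℕ => (((k:ℝ)+(N:ℝ)+1)^2*π^2)^(-(3:ℝ)/4)) := by
    refine (hS32.mul_right (π ^ (-(3:ℝ)/2))).congr fun k => (heq34 k).symm
  have hA : ∑' k : ℕ, (((k:ℝ)+(N:ℝ)+1)^2*π^2)^(-(3:ℝ)/4)
      ≤ 2 / Real.sqrt (N:ℝ) * π ^ (-(3:ℝ)/2) := by
    calc ∑' k : ℕ, (((k:ℝ)+(N:ℝ)+1)^2*π^2)^(-(3:ℝ)/4)
        = ∑' k : ℕ, ((k:ℝ)+(N:ℝ)+1)^(-(3:ℝ)/2) * π ^ (-(3:ℝ)/2) := tsum_congr heq34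
      _ = (∑' k : ℕ, ((k:ℝ)+(N:ℝ)+1)^(-(3:ℝ)/2)) * π ^ (-(3:ℝ)/2) := tsum_mul_right
      _ ≤ 2 / Real.sqrt (N:ℝ) * π ^ (-(3:ℝ)/2) :=
          mul_le_mul_of_nonneg_right hS32le (Real.rpow_nonneg hπ.le _)
  -- summability of RHS and LHS
  have hRHSsumm : Summable (fun k : ℕ =>
      (1/α₁+1/α₂) * ((((k:ℝ)+(N:ℝ)+1)^2*π^2)^((7:ℝ)/4) * (w k)^2)
      + (2*α₁*κ₁^2 + 2*α₂*κ₂^2) * ((((k:ℝ)+(N:ℝ)+1)^2*π^2)^(-(3:ℝ)/4))) :=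
    (hw.mul_left _).add (hS2.mul_left _)
  have hLHSsumm : Summable (fun k : ℕ =>
      2 * ((((k:ℝ)+(N:ℝ)+1)^2*π^2) * w k * (Real.sqrt 2/(((k:ℝ)+(N:ℝ)+1)*π)) * (-κ₁-κ₂))) := by
    rw [← summable_abs_iff]
    refine Summable.of_nonneg_of_le (fun k => abs_nonneg _) (fun k => abs_le.2 ⟨?_, hpt k⟩) hRHSsumm
    have h := hpt' k
    have e : 2 * ((((k:ℝ)+(N:ℝ)+1)^2*π^2) * w k * (Real.sqrt 2/(((k:ℝ)+(N:ℝ)+1)*π)) * (-(-κ₁)-(-κ₂)))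
        = -(2 * ((((k:ℝ)+(N:ℝ)+1)^2*π^2) * w k * (Real.sqrt 2/(((k:ℝ)+(N:ℝ)+1)*π)) * (-κ₁-κ₂))) := by ring
    rw [e] at h
    linarith
  -- final chain
  have hsqrtN : (0:ℝ) < Real.sqrt (N:ℝ) := Real.sqrt_pos.2 (by linarith)
  have hπ32 : (0:ℝ) < π ^ ((3:ℝ)/2) := Real.rpow_pos_of_pos hπ _
  have hπneg : π ^ (-(3:ℝ)/2) = (π ^ ((3:ℝ)/2))⁻¹ := by
    rw [show (-(3:ℝ)/2) = -((3:ℝ)/2) from by ring, Real.rpow_neg hπ.le]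
  calc 2 * ∑' k : ℕ, (((k:ℝ)+(N:ℝ)+1)^2*π^2) * w k * (Real.sqrt 2/(((k:ℝ)+(N:ℝ)+1)*π)) * (-κ₁-κ₂)
      = ∑' k : ℕ, 2 * ((((k:ℝ)+(N:ℝ)+1)^2*π^2) * w k * (Real.sqrt 2/(((k:ℝ)+(N:ℝ)+1)*π)) * (-κ₁-κ₂)) :=
        tsum_mul_left.symm
    _ ≤ ∑' k : ℕ, ((1/α₁+1/α₂) * ((((k:ℝ)+(N:ℝ)+1)^2*π^2)^((7:ℝ)/4) * (w k)^2)
        + (2*α₁*κ₁^2 + 2*α₂*κ₂^2) * ((((k:ℝ)+(N:ℝ)+1)^2*π^2)^(-(3:ℝ)/4))) :=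
        Summable.tsum_le_tsum hpt hLHSsumm hRHSsumm
    _ = (1/α₁+1/α₂) * (∑' k : ℕ, (((k:ℝ)+(N:ℝ)+1)^2*π^2)^((7:ℝ)/4) * (w k)^2)
        + (2*α₁*κ₁^2 + 2*α₂*κ₂^2) * (∑' k : ℕ, (((k:ℝ)+(N:ℝ)+1)^2*π^2)^(-(3:ℝ)/4)) := by
        rw [Summable.tsum_add (hw.mul_left _) (hS2.mul_left _), tsum_mul_left, tsum_mul_left]
    _ ≤ (1/α₁+1/α₂) * (∑' k : ℕ, (((k:ℝ)+(N:ℝ)+1)^2*π^2)^((7:ℝ)/4) * (w k)^2)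
        + (2*α₁*κ₁^2 + 2*α₂*κ₂^2) * (2 / Real.sqrt (N:ℝ) * π ^ (-(3:ℝ)/2)) := by
        have hcoef : (0:ℝ) ≤ 2*α₁*κ₁^2 + 2*α₂*κ₂^2 := by positivity
        have := mul_le_mul_of_nonneg_left hA hcoef
        linarith
    _ = (1 / α₁ + 1 / α₂) * ∑' k : ℕ,
          ((((k : ℝ) + (N : ℝ) + 1) ^ 2 * π ^ 2) ^ ((7 : ℝ) / 4)) * (w k) ^ 2
        + (4 * α₁ / (Real.sqrt (N : ℝ) * π ^ ((3 : ℝ) / 2))) * κ₁ ^ 2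
        + (4 * α₂ / (Real.sqrt (N : ℝ) * π ^ ((3 : ℝ) / 2))) * κ₂ ^ 2 := by
        rw [hπneg]
        generalize ∑' k : ℕ, ((((k : ℝ) + (N : ℝ) + 1) ^ 2 * π ^ 2) ^ ((7 : ℝ) / 4)) * (w k) ^ 2 = S
        field_simp
        ring
end
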